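/- arXiv:1508.00603 — 7 statements merged into one kernel-verified Lean document; each statement's English description precedes it below -/
import Mathlib

section
/- Let p be a prime, d ≥ 1 an integer, and let γ be an element of the finite field F_{p^{d+1}} that is not a root of any nonzero polynomial of degree at most d with coefficients in the prime subfield F_p. Let α_1, ..., α_n be distinct elements of F_p. Then for any two distinct vectors I = (i_1,...,i_n) and J = (j_1,...,j_n) of nonnegative integers with both coordinate sums at most d, and for every nonzero β ∈ F_p, one has ∏_{k=1}^n (γ + α_k)^{i_k} ≠ β · ∏_{k=1}^n (γ + α_k)^{j_k} in F_{p^{d+1}}. -/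
open Polynomial Finset

theorem stmt_1 (p : ℕ) (hp : p.Prime) (d : ℕ) (hd : 1 ≤ d)
    (F : Type*) [Field F] [Fintype F] [CharP F p]
    (hF : Fintype.card F = p ^ (d + 1))
    (γ : F)
    (hγ : ∀ P : Polynomial (ZMod p), P ≠ 0 → P.natDegree ≤ d →
      Polynomial.eval₂ (ZMod.castHom (dvd_refl p) F) γ P ≠ 0)
    {n : ℕ} (α : Fin n → ZMod p) (hα : Function.Injective α)
    (I J : Fin n → ℕ) (hI : (∑ k, I k) ≤ d) (hJ : (∑ k, J k) ≤ d) (hIJ : I ≠ J)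
    (β : ZMod p) (hβ : β ≠ 0) :
    ∏ k, (γ + (ZMod.castHom (dvd_refl p) F) (α k)) ^ I k ≠
      (ZMod.castHom (dvd_refl p) F) β *
        ∏ k, (γ + (ZMod.castHom (dvd_refl p) F) (α k)) ^ J k := by
  haveI : Fact p.Prime := ⟨hp⟩
  set f := ZMod.castHom (dvd_refl p) F with hfdef
  intro h
  -- γ + f a is never zero
  have hroot : ∀ a : ZMod p, γ + f a ≠ 0 := by
    intro a
    have h1 : (X + C a : Polynomial (ZMod p)) ≠ 0 := by
      intro h0
      have := congrArg natDegree h0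
      simp [natDegree_X_add_C] at this
    have h2 : (X + C a : Polynomial (ZMod p)).natDegree ≤ d := by
      rw [natDegree_X_add_C]; omega
    have := hγ (X + C a) h1 h2
    simpa [eval₂_add, eval₂_X, eval₂_C] using this
  set m : Fin n → ℕ := fun k => min (I k) (J k) with hm
  set I' : Fin n → ℕ := fun k => I k - m k with hI'
  set J' : Fin n → ℕ := fun k => J k - m k with hJ'
  have hmne : (∏ k, (γ + f (α k)) ^ m k) ≠ 0 :=
    prod_ne_zero_iff.2 fun k _ => pow_ne_zero _ (hroot _)
  have e1 : ∏ k, (γ + f (α k)) ^ I k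
      = (∏ k, (γ + f (α k)) ^ I' k) * ∏ k, (γ + f (α k)) ^ m k := by
    rw [← prod_mul_distrib]
    refine prod_congr rfl fun k _ => ?_
    rw [← pow_add]
    congr 1
    simp only [hI', hm]
    omega
  have e2 : ∏ k, (γ + f (α k)) ^ J k
      = (∏ k, (γ + f (α k)) ^ J' k) * ∏ k, (γ + f (α k)) ^ m k := by
    rw [← prod_mul_distrib]
    refine prod_congr rfl fun k _ => ?_
    rw [← pow_add]
    congr 1
    simp only [hJ', hm]
    omega
  have key : ∏ k, (γ + f (α k)) ^ I' k = f β * ∏ k, (γ + f (α k)) ^ J' k := by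
    apply mul_right_cancel₀ hmne
    rw [← e1, h, e2, mul_assoc]
  -- the polynomial
  set P : Polynomial (ZMod p) :=
    (∏ k, (X + C (α k)) ^ I' k) - C β * ∏ k, (X + C (α k)) ^ J' k with hP
  have evalP : ∀ x : ZMod p,
      P.eval x = (∏ k, (x + α k) ^ I' k) - β * ∏ k, (x + α k) ^ J' k := by
    intro x
    simp [hP, eval_prod]
  have hcases : ∃ k, (I' k ≠ 0 ∧ J' k = 0) ∨ (J' k ≠ 0 ∧ I' k = 0) := by
    obtain ⟨k, hk⟩ := Function.ne_iff.mp hIJ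
    refine ⟨k, ?_⟩
    simp only [hI', hJ', hm]
    omega
  have hPne : P ≠ 0 := by
    obtain ⟨k, hk | hk⟩ := hcases
    · intro h0
      have h1 := evalP (-α k)
      rw [h0] at h1
      have hz : ∏ l, (-α k + α l) ^ I' l = 0 :=
        Finset.prod_eq_zero (mem_univ k) (by simp [zero_pow hk.1])
      have hnz : ∏ l, (-α k + α l) ^ J' l ≠ 0 := by
        refine prod_ne_zero_iff.2 fun l _ => ?_
        rcases eq_or_ne l k with rfl | hlk
        · simp [hk.2]
        · refine pow_ne_zero _ fun hc => hlk (hα ?_)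
          linear_combination hc
      rw [eval_zero, hz, zero_sub, eq_comm, neg_eq_zero] at h1
      exact mul_ne_zero hβ hnz h1
    · intro h0
      have h1 := evalP (-α k)
      rw [h0] at h1
      have hz : ∏ l, (-α k + α l) ^ J' l = 0 :=
        Finset.prod_eq_zero (mem_univ k) (by simp [zero_pow hk.1])
      have hnz : ∏ l, (-α k + α l) ^ I' l ≠ 0 := by
        refine prod_ne_zero_iff.2 fun l _ => ?_
        rcases eq_or_ne l k with rfl | hlk
        · simp [hk.2]
        · refine pow_ne_zero _ fun hc => hlk (hα ?_)
          linear_combination hc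
      rw [eval_zero, hz, mul_zero, sub_zero, eq_comm] at h1
      exact hnz h1
  have hdegI : (∏ k, (X + C (α k)) ^ I' k : Polynomial (ZMod p)).natDegree = ∑ k, I' k := by
    rw [natDegree_prod]
    · exact Finset.sum_congr rfl fun k _ => by
        rw [natDegree_pow, natDegree_X_add_C, mul_one]
    · exact fun k _ => pow_ne_zero _ (monic_X_add_C (α k)).ne_zero
  have hdegJ : (∏ k, (X + C (α k)) ^ J' k : Polynomial (ZMod p)).natDegree = ∑ k, J' k := by
    rw [natDegree_prod]
    · exact Finset.sum_congr rfl fun k _ => by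
        rw [natDegree_pow, natDegree_X_add_C, mul_one]
    · exact fun k _ => pow_ne_zero _ (monic_X_add_C (α k)).ne_zero
  have hPdeg : P.natDegree ≤ d := by
    refine le_trans (natDegree_sub_le _ _) (max_le ?_ ?_)
    · rw [hdegI]
      exact le_trans (Finset.sum_le_sum fun k _ => Nat.sub_le _ _) hI
    · refine le_trans (natDegree_C_mul_le _ _) ?_
      rw [hdegJ]
      exact le_trans (Finset.sum_le_sum fun k _ => Nat.sub_le _ _) hJ
  apply hγ P hPne hPdeg
  rw [hP]
  simp only [eval₂_sub, eval₂_mul, eval₂_C, eval₂_finset_prod, eval₂_pow, eval₂_add, eval₂_X]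
  rw [sub_eq_zero]
  exact key
end

section
/- Let d and n be positive integers and let p be any prime with p ≥ n. Then there exists a d-Sidon sequence a_1, ..., a_n of nonnegative integers with 0 ≤ a_i < (p^{d+1} − 1)/(p − 1) for all 1 ≤ i ≤ n. -/
/-- A sequence `a_1, ..., a_n` of nonnegative integers is a `d`-Sidon sequence if for any two
distinct vectors `I, J ∈ ℤ_{≥0}^n` with `wt(I), wt(J) ≤ d` one has
`∑ i_k a_k ≠ ∑ j_k a_k`. -/
def IsSidonSeq (d : ℕ) {n : ℕ} (a : Fin n → ℕ) : Prop :=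
  ∀ I J : Fin n → ℕ, (∑ k, I k) ≤ d → (∑ k, J k) ≤ d → I ≠ J →
    ∑ k, I k * a k ≠ ∑ k, J k * a k

open Polynomial Finset

/-- In a field extension of `ZMod p`, every solution of `x ^ p = x` is in the base field. -/
lemma aux_frob_fixed {p : ℕ} [Fact p.Prime] {K : Type*} [Field K] [Algebra (ZMod p) K]
    (x : K) (hx : x ^ p = x) : ∃ z : ZMod p, algebraMap (ZMod p) K z = x := by
  classical
  have hp : p.Prime := Fact.out
  haveI : NeZero p := ⟨hp.pos.ne'⟩
  have hp2 : 2 ≤ p := hp.two_le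
  set f : K[X] := X ^ p - X with hf
  have hcoe : f.coeff p = 1 := by
    rw [hf, coeff_sub, coeff_X_pow, if_pos rfl, coeff_X, if_neg (by omega), sub_zero]
  have hf0 : f ≠ 0 := by
    intro h
    rw [h, coeff_zero] at hcoe
    exact one_ne_zero hcoe.symm
  have hdeg : f.natDegree ≤ p := by
    refine le_trans (natDegree_sub_le _ _) ?_
    simp [natDegree_X_pow, natDegree_X]
    omega
  have hroot : ∀ z : ZMod p, (algebraMap (ZMod p) K z) ∈ f.roots := by
    intro z
    rw [mem_roots hf0]
    simp [hf, IsRoot, ← map_pow, ZMod.pow_card]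
  set S : Finset K := Finset.univ.image (algebraMap (ZMod p) K) with hS
  have hScard : S.card = p := by
    rw [hS, Finset.card_image_of_injective _ (algebraMap (ZMod p) K).injective,
      Finset.card_univ, ZMod.card]
  have hSub : S ⊆ f.roots.toFinset := by
    intro y hy
    rw [hS, Finset.mem_image] at hy
    obtain ⟨z, -, rfl⟩ := hy
    simpa using hroot z
  have hTcard : f.roots.toFinset.card ≤ p :=
    le_trans (Multiset.toFinset_card_le _) (le_trans (Polynomial.card_roots' f) hdeg)
  have hST : S = f.roots.toFinset :=
    Finset.eq_of_subset_of_card_le hSub (by omega)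
  have hxm : x ∈ f.roots.toFinset := by
    rw [Multiset.mem_toFinset, mem_roots hf0]
    simp [hf, IsRoot, hx]
  rw [← hST, hS, Finset.mem_image] at hxm
  obtain ⟨z, -, hz⟩ := hxm
  exact ⟨z, hz⟩

/-- A polynomial of degree `≤ d` over `ZMod p` that vanishes at a generator of a degree `d+1`
extension is zero. -/
lemma aux_poly_zero {p d : ℕ} [Fact p.Prime] {K : Type*} [Field K] [Algebra (ZMod p) K]
    [FiniteDimensional (ZMod p) K]
    (hrank : Module.finrank (ZMod p) K = d + 1)
    {θ : K} (hθ : IntermediateField.adjoin (ZMod p) {θ} = ⊤)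
    {P : (ZMod p)[X]} (hdeg : P.natDegree ≤ d) (h0 : Polynomial.aeval θ P = 0) : P = 0 := by
  by_contra hP
  have hint : IsIntegral (ZMod p) θ := IsIntegral.of_finite _ _
  have h1 : minpoly (ZMod p) θ ∣ P := minpoly.dvd (ZMod p) θ h0
  have h2 : (minpoly (ZMod p) θ).natDegree ≤ P.natDegree :=
    Polynomial.natDegree_le_of_dvd h1 hP
  have h3 := IntermediateField.adjoin.finrank hint
  rw [hθ, IntermediateField.finrank_top'] at h3
  rw [hrank] at h3
  omega

theorem stmt_2 (d n : ℕ) (hd : 0 < d) (hn : 0 < n)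
    (p : ℕ) (hp : p.Prime) (hpn : n ≤ p) :
    ∃ a : Fin n → ℕ, IsSidonSeq d a ∧
      ∀ i, a i < (p ^ (d + 1) - 1) / (p - 1) := by
  classical
  haveI hfact : Fact p.Prime := ⟨hp⟩
  haveI : NeZero p := ⟨hp.pos.ne'⟩
  have hp2 : 2 ≤ p := hp.two_le
  set m := (p ^ (d + 1) - 1) / (p - 1) with hm
  have hdvd : (p - 1) ∣ p ^ (d + 1) - 1 := by
    simpa using Nat.sub_dvd_pow_sub_pow p 1 (d + 1)
  have hmq : m * (p - 1) = p ^ (d + 1) - 1 := Nat.div_mul_cancel hdvd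
  have hq1 : p + 1 ≤ p ^ (d + 1) := by
    calc p + 1 ≤ p * p := by nlinarith
    _ = p ^ 2 := (sq p).symm
    _ ≤ p ^ (d + 1) := Nat.pow_le_pow_right hp.pos (by omega)
  have hm_pos : 0 < m := by
    rcases Nat.eq_zero_or_pos m with h | h
    · rw [h, zero_mul] at hmq; omega
    · exact h
  haveI : Fintype (GaloisField p (d + 1)) := Fintype.ofFinite _
  have hcard : Fintype.card (GaloisField p (d + 1)) = p ^ (d + 1) := by
    rw [← Nat.card_eq_fintype_card]
    exact GaloisField.card p (d + 1) (by omega)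
  have hrank : Module.finrank (ZMod p) (GaloisField p (d + 1)) = d + 1 := by
    have h := Module.card_eq_pow_finrank (K := ZMod p) (V := GaloisField p (d + 1))
    rw [hcard, ZMod.card] at h
    exact Nat.pow_right_injective hp2 h.symm
  obtain ⟨g, hg⟩ := IsCyclic.exists_generator (α := (GaloisField p (d + 1))ˣ)
  have hg' : ∀ x : (GaloisField p (d + 1))ˣ, x ∈ Submonoid.powers g :=
    fun x => mem_powers_iff_mem_zpowers.mpr (hg x)
  have horder : orderOf g = p ^ (d + 1) - 1 := by
    rw [orderOf_eq_card_of_forall_mem_zpowers hg, Nat.card_units,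
      Nat.card_eq_fintype_card, hcard]
  set θ : GaloisField p (d + 1) := ((g : (GaloisField p (d + 1))ˣ) : GaloisField p (d + 1)) with hθdef
  -- θ is not in the prime field
  have hnotF : ∀ z : ZMod p, θ ≠ algebraMap (ZMod p) _ z := by
    intro z hzeq
    have hz0 : z ≠ 0 := by
      rintro rfl
      rw [map_zero, hθdef] at hzeq
      exact g.ne_zero hzeq
    have h1 : θ ^ (p - 1) = 1 := by
      rw [hzeq, ← map_pow, ZMod.pow_card_sub_one_eq_one hz0, map_one]
    have hgp : g ^ (p - 1) = 1 := by
      ext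
      rw [hθdef] at h1
      simpa using h1
    have h2 := Nat.le_of_dvd (by omega) (horder ▸ orderOf_dvd_of_pow_eq_one hgp)
    omega
  -- adjoining θ gives the whole field
  have htop : IntermediateField.adjoin (ZMod p) {θ} = ⊤ := by
    rw [eq_top_iff]
    intro x _
    by_cases hx : x = 0
    · rw [hx]; exact zero_mem _
    · obtain ⟨t, ht⟩ := hg' (Units.mk0 x hx)
      have hxt : x = θ ^ t := by
        have := congrArg (Units.val) ht
        simpa [hθdef] using this.symm
      rw [hxt]
      exact pow_mem (IntermediateField.mem_adjoin_simple_self (ZMod p) θ) t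
  -- the points of the prime field used to shift θ
  set r : Fin n → ZMod p := fun k => ((k : ℕ) : ZMod p) with hr
  have hrinj : Function.Injective r := by
    intro k k' h
    have h1 := congrArg ZMod.val h
    rw [hr] at h1
    simp only [ZMod.val_natCast_of_lt (lt_of_lt_of_le k.isLt hpn),
      ZMod.val_natCast_of_lt (lt_of_lt_of_le k'.isLt hpn)] at h1
    exact Fin.ext h1
  set u : Fin n → GaloisField p (d + 1) := fun k => θ - algebraMap (ZMod p) _ (r k) with hu
  have hu0 : ∀ k, u k ≠ 0 := by
    intro k h
    rw [hu, sub_eq_zero] at h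
    exact hnotF (r k) h
  set U : Fin n → (GaloisField p (d + 1))ˣ := fun k => Units.mk0 (u k) (hu0 k) with hU
  -- discrete logarithms
  have hedef : ∀ k, ∃ e : ℕ, g ^ e = U k := fun k => hg' (U k)
  choose e he using hedef
  refine ⟨fun k => e k % m, ?_, fun i => Nat.mod_lt _ hm_pos⟩
  intro I J hI hJ hIJ hsum
  set A := ∑ k, I k * e k with hA
  set B := ∑ k, J k * e k with hB
  have key : ∀ F : Fin n → ℕ, (∑ k, F k * e k) % m = (∑ k, F k * (e k % m)) % m := by
    intro F
    conv_lhs => rw [Finset.sum_nat_mod]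
    conv_rhs => rw [Finset.sum_nat_mod]
    congr 1
    refine Finset.sum_congr rfl fun k _ => ?_
    conv_lhs => rw [Nat.mul_mod]
    conv_rhs => rw [Nat.mul_mod]
    rw [Nat.mod_mod_of_dvd _ dvd_rfl]
  have hmod : A % m = B % m := by
    rw [hA, hB, key I, key J, hsum]
  have hAB : A + m * (B / m) = B + m * (A / m) := by
    have h1 := Nat.div_add_mod A m
    have h2 := Nat.div_add_mod B m
    omega
  have hpow : ∀ F : Fin n → ℕ, g ^ (∑ k, F k * e k) = ∏ k, U k ^ F k := by
    intro F
    rw [← Finset.prod_pow_eq_pow_sum]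
    refine Finset.prod_congr rfl fun k _ => ?_
    rw [mul_comm (F k) (e k), pow_mul, he k]
  have hgeq : g ^ (A + m * (B / m)) = g ^ (B + m * (A / m)) := by rw [hAB]
  rw [pow_add, pow_add, pow_mul, pow_mul, hA, hB, hpow I, hpow J] at hgeq
  -- the modular correction factors lie in the prime field
  have hgm1 : (g ^ m) ^ (p - 1) = 1 := by
    rw [← pow_mul, hmq, ← horder, pow_orderOf_eq_one]
  have hfrob : ∀ t : ℕ, ∃ z : ZMod p,
      algebraMap (ZMod p) (GaloisField p (d + 1)) z = (((g ^ m) ^ t : _ˣ) : GaloisField p (d + 1)) := by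
    intro t
    apply aux_frob_fixed
    have h1 : ((g ^ m) ^ t) ^ p = (g ^ m) ^ t := by
      have : ((g ^ m) ^ t) ^ (p - 1) = 1 := by
        rw [pow_right_comm, hgm1, one_pow]
      calc ((g ^ m) ^ t) ^ p = ((g ^ m) ^ t) ^ (p - 1 + 1) := by congr 1; omega
      _ = (g ^ m) ^ t := by rw [pow_succ, this, one_mul]
    have := congrArg (Units.val) h1
    simpa using this
  obtain ⟨z1, hz1⟩ := hfrob (B / m)
  obtain ⟨z2, hz2⟩ := hfrob (A / m)
  have hz10 : z1 ≠ 0 := by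
    intro h
    rw [h, map_zero] at hz1
    exact ((g ^ m) ^ (B / m)).ne_zero hz1.symm
  have hz20 : z2 ≠ 0 := by
    intro h
    rw [h, map_zero] at hz2
    exact ((g ^ m) ^ (A / m)).ne_zero hz2.symm
  -- pass to the field
  have hKeq : (∏ k, u k ^ I k) * algebraMap (ZMod p) _ z1
      = (∏ k, u k ^ J k) * algebraMap (ZMod p) _ z2 := by
    have := congrArg (Units.coeHom (GaloisField p (d + 1))) hgeq
    simp only [map_mul, map_prod, map_pow, Units.coeHom_apply] at this
    rw [hz1, hz2]
    simpa [hU] using this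
  -- compare polynomials
  set Q : (Fin n → ℕ) → ZMod p → (ZMod p)[X] :=
    fun F z => (∏ k, (X - C (r k)) ^ F k) * C z with hQ
  have hQeval : ∀ (F : Fin n → ℕ) (z : ZMod p),
      Polynomial.aeval θ (Q F z) = (∏ k, u k ^ F k) * algebraMap (ZMod p) _ z := by
    intro F z
    simp [hQ, hu, sub_eq_add_neg]
  have hQdeg : ∀ (F : Fin n → ℕ), (∑ k, F k) ≤ d → ∀ z : ZMod p, (Q F z).natDegree ≤ d := by
    intro F hF z
    refine le_trans (natDegree_mul_le) ?_
    rw [natDegree_C, add_zero]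
    refine le_trans (natDegree_prod_le _ _) (le_trans ?_ hF)
    apply Finset.sum_le_sum
    intro k _
    rw [natDegree_pow, natDegree_X_sub_C, mul_one]
  have hQQ : Q I z1 = Q J z2 := by
    have h0 : Polynomial.aeval θ (Q I z1 - Q J z2) = 0 := by
      rw [map_sub, hQeval, hQeval, hKeq, sub_self]
    have hdeg : (Q I z1 - Q J z2).natDegree ≤ d :=
      le_trans (natDegree_sub_le _ _) (max_le (hQdeg I hI z1) (hQdeg J hJ z2))
    have := aux_poly_zero hrank htop hdeg h0
    exact sub_eq_zero.mp this
  -- count roots to recover the exponents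
  have hcount : ∀ (F : Fin n → ℕ) (z : ZMod p), z ≠ 0 → ∀ k,
      (Q F z).roots.count (r k) = F k := by
    intro F z hz k
    have hmon : (∏ k', (X - C (r k')) ^ F k' : (ZMod p)[X]).Monic :=
      monic_prod_of_monic _ _ fun k' _ => (monic_X_sub_C (r k')).pow _
    have hne : (∏ k', (X - C (r k')) ^ F k' : (ZMod p)[X]) ≠ 0 := hmon.ne_zero
    rw [hQ]
    simp only []
    rw [mul_comm, roots_C_mul _ hz, Polynomial.roots_prod _ _ hne]
    simp only [roots_pow, roots_X_sub_C]
    rw [Multiset.count_bind]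
    show (∑ k' : Fin n, Multiset.count (r k) (F k' • ({r k'} : Multiset (ZMod p)))) = F k
    rw [Finset.sum_eq_single k]
    · simp [Multiset.count_nsmul, Multiset.count_singleton]
    · intro k' _ hk'
      have hne' : r k ≠ r k' := fun hh => hk' (hrinj hh.symm)
      simp [Multiset.count_nsmul, Multiset.count_singleton, hne']
    · intro h
      exact absurd (Finset.mem_univ k) h
  apply hIJ
  funext k
  rw [← hcount I z1 hz10 k, ← hcount J z2 hz20 k, hQQ]
end

section
/- Let d and n be positive integers, let p be any prime with p ≥ n, and set M = (p^{d+1} − 1)/(p − 1). Then there exists a d-Sidon sequence a_1, ..., a_n satisfying dM ≤ a_i < (d+1)M for all 1 ≤ i ≤ n. -/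
open Polynomial Finset

section Aux

variable {p : ℕ} [Fact p.Prime] {F : Type*} [Field F] [Fintype F] [Algebra (ZMod p) F]

/-- in a finite field of characteristic p, solutions of `x^p = x` lie in the prime field. -/
lemma mem_primeField_of_pow_card {x : F} (hx : x ^ p = x) :
    ∃ y : ZMod p, algebraMap (ZMod p) F y = x := by
  classical
  have hp2 : 2 ≤ p := (Fact.out : p.Prime).two_le
  set q : F[X] := X ^ p - X with hq
  have hdX : (X : F[X]).natDegree < (X ^ p : F[X]).natDegree := by
    simp only [natDegree_X_pow, natDegree_X]
    omega
  have hqdeg : q.natDegree = p := by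
    rw [hq, natDegree_sub_eq_left_of_natDegree_lt hdX, natDegree_X_pow]
  have hqne : q ≠ 0 := by
    intro h
    rw [h, natDegree_zero] at hqdeg
    omega
  set S : Finset F := q.roots.toFinset with hS
  set T : Finset F := Finset.univ.image (algebraMap (ZMod p) F) with hT
  have hroot : ∀ z : F, z ^ p = z → z ∈ S := by
    intro z hz
    rw [hS, Multiset.mem_toFinset, mem_roots hqne]
    simp [hq, IsRoot, hz]
  have hTS : T ⊆ S := by
    intro z hz
    rw [hT, Finset.mem_image] at hz
    obtain ⟨y, -, rfl⟩ := hz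
    apply hroot
    rw [← map_pow, ZMod.pow_card]
  have hScard : S.card ≤ p := by
    calc S.card ≤ Multiset.card q.roots := Multiset.toFinset_card_le _
    _ ≤ q.natDegree := q.card_roots'
    _ = p := hqdeg
  have hTcard : T.card = p := by
    rw [hT, Finset.card_image_of_injective _ (algebraMap (ZMod p) F).injective]
    simp [ZMod.card]
  have hST : S = T := (Finset.eq_of_subset_of_card_le hTS (by omega)).symm
  have : x ∈ T := by rw [← hST]; exact hroot x hx
  rw [hT, Finset.mem_image] at this
  obtain ⟨y, -, hy⟩ := this
  exact ⟨y, hy⟩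

end Aux

theorem stmt_3 (d n : ℕ) (hd : 0 < d) (hn : 0 < n)
    (p : ℕ) (hp : p.Prime) (hpn : n ≤ p)
    (M : ℕ) (hM : M = (p ^ (d + 1) - 1) / (p - 1)) :
    ∃ a : Fin n → ℕ, IsSidonSeq d a ∧
      ∀ i, d * M ≤ a i ∧ a i < (d + 1) * M := by
  classical
  haveI : Fact p.Prime := ⟨hp⟩
  have hp2 : 2 ≤ p := hp.two_le
  -- arithmetic facts about M
  have hMsum : ∑ i ∈ range (d + 1), p ^ i = M := by rw [hM, Nat.geomSum_eq hp2]
  have hMpos : 0 < M := by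
    rw [← hMsum]
    exact Finset.sum_pos (fun i _ => pow_pos (by omega) i) ⟨0, by simp⟩
  have hMmul : M * (p - 1) = p ^ (d + 1) - 1 := by
    rw [← hMsum]
    have := geom_sum_mul_add (p - 1) (d + 1)
    rw [Nat.sub_add_cancel (by omega)] at this
    omega
  set N : ℕ := p ^ (d + 1) - 1 with hN
  have hNpos : 0 < N := by
    have : p ^ 1 ≤ p ^ (d + 1) := Nat.pow_le_pow_right (by omega) (by omega)
    simp only [pow_one] at this
    omega
  -- the Galois field
  set F := GaloisField p (d + 1) with hF
  haveI : Fintype F := Fintype.ofFinite F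
  have hcardF : Fintype.card F = p ^ (d + 1) := by
    rw [← Nat.card_eq_fintype_card, GaloisField.card p (d + 1) (by omega)]
  obtain ⟨g, hg⟩ := IsCyclic.exists_generator (α := Fˣ)
  have hog : orderOf g = N := by
    rw [orderOf_eq_card_of_forall_mem_zpowers hg, Nat.card_eq_fintype_card,
      Fintype.card_units, hcardF]
  set θ : F := (g : F) with hθ
  have hθne : θ ≠ 0 := Units.ne_zero g
  have hθord : orderOf θ = N := by rw [hθ, orderOf_units, hog]
  -- annihilation lemma: no nonzero polynomial of degree ≤ d over ZMod p kills θ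
  have hann : ∀ q : (ZMod p)[X], q.natDegree ≤ d → Polynomial.aeval θ q = 0 → q = 0 := by
    intro q hqd hq0
    by_contra hqne
    have hint : IsIntegral (ZMod p) θ := IsIntegral.of_finite _ _
    have hdvd : minpoly (ZMod p) θ ∣ q := minpoly.dvd _ _ hq0
    have hmd : (minpoly (ZMod p) θ).natDegree ≤ d :=
      le_trans (Polynomial.natDegree_le_of_dvd hdvd hqne) hqd
    set K' := IntermediateField.adjoin (ZMod p) {θ} with hK'
    have hfr : Module.finrank (ZMod p) K' = (minpoly (ZMod p) θ).natDegree :=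
      IntermediateField.adjoin.finrank hint
    haveI : Fintype K' := Fintype.ofFinite K'
    have hcardK' : Fintype.card K' = p ^ Module.finrank (ZMod p) K' := by
      rw [Module.card_eq_pow_finrank (K := ZMod p) (V := K'), ZMod.card]
    set θ' : K' := ⟨θ, IntermediateField.mem_adjoin_simple_self (ZMod p) θ⟩ with hθ'
    have hθ'ne : θ' ≠ 0 := by
      intro h
      apply hθne
      exact congrArg Subtype.val h
    have hpow : θ' ^ (Fintype.card K' - 1) = 1 := FiniteField.pow_card_sub_one_eq_one θ' hθ'ne
    have hpowF : θ ^ (Fintype.card K' - 1) = 1 := by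
      have := congrArg (Subtype.val) hpow
      push_cast at this
      exact this
    have hdvd2 : N ∣ Fintype.card K' - 1 := hθord ▸ orderOf_dvd_of_pow_eq_one hpowF
    have hcard2 : 2 ≤ Fintype.card K' := Fintype.one_lt_card
    have hle : Fintype.card K' - 1 < N := by
      have h1 : Fintype.card K' ≤ p ^ d := by
        rw [hcardK']
        exact Nat.pow_le_pow_right (by omega) (hfr ▸ hmd)
      have h2 : p ^ d < p ^ (d + 1) := Nat.pow_lt_pow_right (by omega) (by omega)
      omega
    have := Nat.le_of_dvd (by omega) hdvd2
    omega
  -- the elements x_k and their shifts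
  set x : Fin n → ZMod p := fun k => ((k : ℕ) : ZMod p) with hx
  have hxinj : Function.Injective x := by
    intro k l hkl
    simp only [hx] at hkl
    have h2 := congrArg ZMod.val hkl
    rw [ZMod.val_cast_of_lt (by omega), ZMod.val_cast_of_lt (by omega)] at h2
    exact Fin.ext h2
  have halg : ∀ y : ZMod p, (algebraMap (ZMod p) F y) ^ p = algebraMap (ZMod p) F y := by
    intro y
    rw [← map_pow, ZMod.pow_card]
  have hθx : ∀ k : Fin n, θ + algebraMap (ZMod p) F (x k) ≠ 0 := by
    intro k h
    have hθeq : θ = - algebraMap (ZMod p) F (x k) := by linear_combination h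
    have hθp : θ ^ p = θ := by
      rw [hθeq, ← map_neg, halg]
    have : θ ^ (p - 1) = 1 := by
      have h1 : θ ^ (p - 1) * θ = θ := by
        rw [← pow_succ, Nat.sub_add_cancel (by omega)]
        exact hθp
      exact mul_right_cancel₀ hθne (h1.trans (one_mul θ).symm)
    have hdvd3 := hθord ▸ orderOf_dvd_of_pow_eq_one this
    have h4 := Nat.le_of_dvd (by omega) hdvd3
    have h5 : p * p ≤ p ^ (d + 1) := by
      calc p * p = p ^ 2 := by ring
      _ ≤ p ^ (d + 1) := Nat.pow_le_pow_right (by omega) (by omega)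
    have h6 : p ^ (d + 1) ≤ p := by omega
    nlinarith
  -- discrete logs
  set u : Fin n → Fˣ := fun k => Units.mk0 _ (hθx k) with hu
  have hlog : ∀ k : Fin n, ∃ m : ℕ, g ^ m = u k := by
    intro k
    have := (mem_powers_iff_mem_zpowers).2 (hg (u k))
    obtain ⟨m, hm⟩ := this
    exact ⟨m, hm⟩
  choose m hm using hlog
  set b : Fin n → ℕ := fun k => m k % M with hb
  have hbM : ∀ k, b k < M := fun k => Nat.mod_lt _ hMpos
  set e : Fˣ := g ^ M with he
  have hepow : e ^ (p - 1) = 1 := by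
    rw [he, ← pow_mul, hMmul, ← hog, pow_orderOf_eq_one]
  have hkey : ∀ k : Fin n, g ^ (b k) * e ^ (m k / M) = u k := by
    intro k
    rw [he, ← pow_mul, ← pow_add, hb]
    rw [Nat.mod_add_div (m k) M]
    exact hm k
  -- the sequence
  refine ⟨fun k => d * M + b k, ?_, ?_⟩
  swap
  · intro i
    have h1 := hbM i
    have h2 : (d + 1) * M = d * M + M := by ring
    constructor
    · show d * M ≤ d * M + b i
      omega
    · show d * M + b i < (d + 1) * M
      omega
  -- Sidon property
  intro I J hI hJ hIJ hsum
  apply hIJ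
  -- reorganize the sums
  have hsplit : ∀ K : Fin n → ℕ, ∑ k, K k * (d * M + b k)
      = (∑ k, K k) * (d * M) + ∑ k, K k * b k := by
    intro K
    simp only [mul_add]
    rw [Finset.sum_add_distrib, Finset.sum_mul]
  rw [hsplit I, hsplit J] at hsum
  have hsI : ∑ k, I k * b k < d * M := by
    have hms : d * (M - 1) + d = d * M := by
      cases M with
      | zero => omega
      | succ m => simp [Nat.mul_succ]
    have hle2 : ∑ k, I k * b k ≤ d * (M - 1) := by
      calc ∑ k, I k * b k ≤ ∑ k, I k * (M - 1) := by
            apply Finset.sum_le_sum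
            intro k _
            exact Nat.mul_le_mul le_rfl (by have := hbM k; omega)
      _ = (∑ k, I k) * (M - 1) := by rw [← Finset.sum_mul]
      _ ≤ d * (M - 1) := Nat.mul_le_mul hI le_rfl
    omega
  have hsJ : ∑ k, J k * b k < d * M := by
    have hms : d * (M - 1) + d = d * M := by
      cases M with
      | zero => omega
      | succ m => simp [Nat.mul_succ]
    have hle2 : ∑ k, J k * b k ≤ d * (M - 1) := by
      calc ∑ k, J k * b k ≤ ∑ k, J k * (M - 1) := by
            apply Finset.sum_le_sum
            intro k _
            exact Nat.mul_le_mul le_rfl (by have := hbM k; omega)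
      _ = (∑ k, J k) * (M - 1) := by rw [← Finset.sum_mul]
      _ ≤ d * (M - 1) := Nat.mul_le_mul hJ le_rfl
    omega
  have hwt : (∑ k, I k) = ∑ k, J k := by
    have h1 : ((∑ k, I k) * (d * M) + ∑ k, I k * b k) / (d * M) = ∑ k, I k := by
      have hdM : 0 < d * M := Nat.mul_pos hd hMpos
      rw [mul_comm (∑ k, I k) (d * M), Nat.mul_add_div hdM, Nat.div_eq_of_lt hsI]
      omega
    have h2 : ((∑ k, J k) * (d * M) + ∑ k, J k * b k) / (d * M) = ∑ k, J k := by
      have hdM : 0 < d * M := Nat.mul_pos hd hMpos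
      rw [mul_comm (∑ k, J k) (d * M), Nat.mul_add_div hdM, Nat.div_eq_of_lt hsJ]
      omega
    rw [← h1, ← h2, hsum]
  have hbsum : ∑ k, I k * b k = ∑ k, J k * b k := by
    rw [hwt] at hsum
    omega
  -- now move to the field
  have hexpand : ∀ K : Fin n → ℕ, (∏ k, (u k) ^ (K k))
      = g ^ (∑ k, K k * b k) * e ^ (∑ k, K k * (m k / M)) := by
    intro K
    rw [← Finset.prod_pow_eq_pow_sum, ← Finset.prod_pow_eq_pow_sum,
      ← Finset.prod_mul_distrib]
    apply Finset.prod_congr rfl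
    intro k _
    rw [mul_comm (K k) (b k), pow_mul, mul_comm (K k) (m k / M), pow_mul, ← hkey k, mul_pow]
  have hmain : (∏ k, (u k) ^ (I k)) * e ^ (∑ k, J k * (m k / M))
      = (∏ k, (u k) ^ (J k)) * e ^ (∑ k, I k * (m k / M)) := by
    rw [hexpand I, hexpand J, hbsum, mul_assoc, mul_assoc, ← pow_add, ← pow_add]
    exact congrArg (fun t => (g ^ ∑ k, J k * b k) * e ^ t) (Nat.add_comm _ _)
  set tI : ℕ := ∑ k, I k * (m k / M) with htI
  set tJ : ℕ := ∑ k, J k * (m k / M) with htJ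
  -- e lies in the prime field
  have heF : ((e : F)) ^ p = (e : F) := by
    have h1 : ((e : F)) ^ (p - 1) = 1 := by
      rw [← Units.val_pow_eq_pow_val, hepow, Units.val_one]
    calc (e : F) ^ p = (e : F) ^ (p - 1) * (e : F) := by
          rw [← pow_succ, Nat.sub_add_cancel (by omega)]
    _ = (e : F) := by rw [h1, one_mul]
  obtain ⟨z, hz⟩ := mem_primeField_of_pow_card heF
  have hzne : z ≠ 0 := by
    intro h
    rw [h, map_zero] at hz
    exact Units.ne_zero e hz.symm
  -- pass to F
  have hcoe : ∀ K : Fin n → ℕ, ((∏ k, (u k) ^ (K k) : Fˣ) : F)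
      = ∏ k, (θ + algebraMap (ZMod p) F (x k)) ^ (K k) := by
    intro K
    push_cast
    apply Finset.prod_congr rfl
    intro k _
    rw [hu]
    rfl
  have hmainF : algebraMap (ZMod p) F (z ^ tJ)
        * (∏ k, (θ + algebraMap (ZMod p) F (x k)) ^ (I k))
      = algebraMap (ZMod p) F (z ^ tI)
        * (∏ k, (θ + algebraMap (ZMod p) F (x k)) ^ (J k)) := by
    have h := congrArg (Units.val) hmain
    rw [Units.val_mul, Units.val_mul, hcoe I, hcoe J] at h
    rw [map_pow, map_pow, hz, ← Units.val_pow_eq_pow_val, ← Units.val_pow_eq_pow_val]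
    linear_combination h
  -- polynomials
  have haeval : ∀ (K : Fin n → ℕ) (w : ZMod p),
      Polynomial.aeval θ (C w * ∏ k, (X + C (x k)) ^ (K k))
      = algebraMap (ZMod p) F w * ∏ k, (θ + algebraMap (ZMod p) F (x k)) ^ (K k) := by
    intro K w
    rw [map_mul, aeval_C, map_prod]
    congr 1
    apply Finset.prod_congr rfl
    intro k _
    rw [map_pow, map_add, aeval_X, aeval_C]
  have hProdMonic : ∀ K : Fin n → ℕ, (∏ k, (X + C (x k)) ^ (K k)).Monic :=
    fun K => monic_prod_of_monic _ _ (fun k _ => (monic_X_add_C (x k)).pow (K k))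
  have hdegProd : ∀ K : Fin n → ℕ, (∑ k, K k) ≤ d →
      (∏ k, (X + C (x k)) ^ (K k)).natDegree ≤ d := by
    intro K hK
    rw [natDegree_prod _ _ (fun k _ => ((monic_X_add_C (x k)).pow (K k)).ne_zero)]
    calc ∑ k, ((X + C (x k)) ^ (K k)).natDegree = ∑ k, K k := by
          apply Finset.sum_congr rfl
          intro k _
          rw [natDegree_pow, natDegree_X_add_C, mul_one]
    _ ≤ d := hK
  have hABzero : C (z ^ tJ) * (∏ k, (X + C (x k)) ^ (I k))
      - C (z ^ tI) * (∏ k, (X + C (x k)) ^ (J k)) = 0 := by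
    apply hann
    · refine le_trans (natDegree_sub_le _ _) ?_
      have h1 := le_trans (natDegree_C_mul_le (z ^ tJ) _) (hdegProd I hI)
      have h2 := le_trans (natDegree_C_mul_le (z ^ tI) _) (hdegProd J hJ)
      omega
    · rw [map_sub, haeval I, haeval J, hmainF, sub_self]
  have hAB : C (z ^ tJ) * (∏ k, (X + C (x k)) ^ (I k))
      = C (z ^ tI) * (∏ k, (X + C (x k)) ^ (J k)) := sub_eq_zero.mp hABzero
  -- leading coefficients
  have hlc : z ^ tJ = z ^ tI := by
    have h1 := congrArg Polynomial.leadingCoeff hAB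
    rw [leadingCoeff_mul, leadingCoeff_mul, leadingCoeff_C, leadingCoeff_C,
      (hProdMonic I).leadingCoeff, (hProdMonic J).leadingCoeff, mul_one, mul_one] at h1
    exact h1
  have hprodeq : (∏ k, (X + C (x k)) ^ (I k)) = ∏ k, (X + C (x k)) ^ (J k) := by
    rw [← hlc] at hAB
    exact mul_left_cancel₀ (by simpa using pow_ne_zero tJ hzne) hAB
  have hroots : ∀ K : Fin n → ℕ, (∏ k, (X + C (x k)) ^ (K k)).roots
      = (Finset.univ.val : Multiset (Fin n)).bind
        (fun k => (K k) • ({-(x k)} : Multiset (ZMod p))) := by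
    intro K
    rw [roots_prod _ _ (hProdMonic K).ne_zero]
    congr 1
    ext k
    have hXC : X + C (x k) = X - C (-(x k)) := by
      rw [map_neg, sub_neg_eq_add]
    rw [roots_pow, hXC, roots_X_sub_C]
  have hrootseq := congrArg Polynomial.roots hprodeq
  rw [hroots I, hroots J] at hrootseq
  funext k0
  have hcount := congrArg (Multiset.count (-(x k0))) hrootseq
  have hcountK : ∀ K : Fin n → ℕ, Multiset.count (-(x k0))
      ((Finset.univ.val : Multiset (Fin n)).bind
        (fun k => (K k) • ({-(x k)} : Multiset (ZMod p))))
      = K k0 := by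
    intro K
    rw [Multiset.count_bind]
    have hmap : ∀ k : Fin n, Multiset.count (-(x k0)) ((K k) • ({-(x k)} : Multiset (ZMod p)))
        = if k = k0 then K k else 0 := by
      intro k
      rw [Multiset.count_nsmul, Multiset.count_singleton]
      by_cases h : k = k0
      · subst h
        simp
      · have hne : (-(x k0) : ZMod p) ≠ -(x k) := by
          intro hcon
          exact h (hxinj (neg_injective hcon)).symm
        simp [hne, h]
    calc Multiset.sum (Multiset.map (fun k => Multiset.count (-(x k0))
          ((K k) • ({-(x k)} : Multiset (ZMod p)))) Finset.univ.val)
        = Multiset.sum (Multiset.map (fun k => if k = k0 then K k else 0) Finset.univ.val) := by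
          congr 1
          apply Multiset.map_congr rfl
          intro k _
          exact hmap k
    _ = ∑ k : Fin n, (if k = k0 then K k else 0) := rfl
    _ = K k0 := by rw [Finset.sum_ite_eq' Finset.univ k0 K]; simp
  rw [hcountK I, hcountK J] at hcount
  exact hcount
end

section
/- Let q be a prime power and let d, k, m be integers with d ≥ 2 and d(k−1) < m ≤ q. Then there exists a (d, k, m)_q-multiplication friendly pair (π, ψ) such that every nonzero vector in the F_q-linear span of the set {π(α_1) ∗ π(α_2) ∗ ⋯ ∗ π(α_d) : α_1, ..., α_d ∈ F_{q^k}} has Hamming weight at least m − d(k−1). -/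
/-- `(π, ψ)` is a `(d, k, m)_q`-multiplication friendly pair (with `Fq` the field with `q`
elements and `K` the field with `q^k` elements): `π : K → Fq^m` and `ψ : Fq^m → K` are
`Fq`-linear, `π 1 = (1, ..., 1)`, and `ψ(π(α_1) ∗ ⋯ ∗ π(α_d)) = α_1 ⋯ α_d` for all `α_i ∈ K`,
where `∗` is the coordinatewise product. -/
def IsMulFriendlyPair (Fq K : Type*) [Field Fq] [Field K] [Algebra Fq K]
    (d m : ℕ) (π : K →ₗ[Fq] (Fin m → Fq)) (ψ : (Fin m → Fq) →ₗ[Fq] K) : Prop :=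
  π 1 = 1 ∧ ∀ α : Fin d → K, ψ (∏ i, π (α i)) = ∏ i, α i

theorem stmt_5 (q k m d : ℕ) (hq : IsPrimePow q) (hd : 2 ≤ d) (hk : 1 ≤ k)
    (hm1 : d * (k - 1) < m) (hm2 : m ≤ q)
    (Fq K : Type*) [Field Fq] [Fintype Fq] [DecidableEq Fq]
    [Field K] [Fintype K] [Algebra Fq K]
    (hcq : Fintype.card Fq = q) (hcK : Fintype.card K = q ^ k) :
    ∃ (π : K →ₗ[Fq] (Fin m → Fq)) (ψ : (Fin m → Fq) →ₗ[Fq] K),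
      IsMulFriendlyPair Fq K d m π ψ ∧
      ∀ v ∈ Submodule.span Fq {w : Fin m → Fq | ∃ α : Fin d → K, w = ∏ i, π (α i)},
        v ≠ 0 → m - d * (k - 1) ≤ hammingNorm v := by
  classical
  have hq1 : 1 < q := hq.one_lt
  haveI : FiniteDimensional Fq K := Module.Finite.of_finite
  -- finrank Fq K = k
  have hcard : Fintype.card K = Fintype.card Fq ^ Module.finrank Fq K :=
    Module.card_eq_pow_finrank
  rw [hcq, hcK] at hcard
  have hfr : Module.finrank Fq K = k :=
    (Nat.pow_right_injective hq1 hcard.symm)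
  -- primitive element
  obtain ⟨θ, hθ⟩ := Field.exists_primitive_element_of_finite_top Fq K
  have hint : IsIntegral Fq θ := IsIntegral.of_finite Fq θ
  let pb : PowerBasis Fq K :=
    (IntermediateField.adjoin.powerBasis hint).map
      ((IntermediateField.equivOfEq hθ).trans IntermediateField.topEquiv)
  have hdim : pb.dim = k := by
    rw [← hfr, pb.finrank]
  let b : Module.Basis (Fin k) Fq K := pb.basis.reindex (finCongr hdim)
  have hb : ∀ i : Fin k, b i = pb.gen ^ (i : ℕ) := by
    intro i
    simp [b, Module.Basis.reindex_apply, pb.basis_eq_pow]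
  -- representation map
  let rep : K →ₗ[Fq] Polynomial Fq :=
    (Polynomial.degreeLT Fq k).subtype ∘ₗ
      ((Polynomial.degreeLTEquiv Fq k).symm.toLinearMap ∘ₗ b.equivFun.toLinearMap)
  have hrep_def : ∀ α : K, rep α = ∑ i : Fin k, Polynomial.monomial (i : ℕ) (b.equivFun α i) :=
    fun _ => rfl
  have hrep_mem : ∀ α : K, rep α ∈ Polynomial.degreeLT Fq k :=
    fun α => ((Polynomial.degreeLTEquiv Fq k).symm (b.equivFun α)).2
  have hrep_eval : ∀ α : K, Polynomial.aeval pb.gen (rep α) = α := by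
    intro α
    rw [hrep_def, map_sum]
    simp only [Polynomial.aeval_monomial, ← Algebra.smul_def]
    conv_rhs => rw [← b.sum_equivFun α]
    refine Finset.sum_congr rfl fun i _ => ?_
    rw [hb]
  have hrep_nd : ∀ α : K, (rep α).natDegree ≤ k - 1 := by
    intro α
    by_cases h : rep α = 0
    · simp [h]
    · have h1 := Polynomial.mem_degreeLT.mp (hrep_mem α)
      have h2 := (Polynomial.natDegree_lt_iff_degree_lt h).mpr h1
      omega
  -- evaluation points
  obtain ⟨a⟩ : Nonempty (Fin m ↪ Fq) := by
    rw [Function.Embedding.nonempty_iff_card_le, Fintype.card_fin, hcq]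
    exact hm2
  have ha_inj : Set.InjOn a (Finset.univ : Finset (Fin m)) :=
    fun x _ y _ h => a.injective h
  -- evaluation map
  let ev : Polynomial Fq →ₗ[Fq] (Fin m → Fq) :=
    LinearMap.pi fun j => Polynomial.leval (a j)
  have hev : ∀ (Q : Polynomial Fq) (j : Fin m), ev Q j = Q.eval (a j) := fun _ _ => rfl
  let π : K →ₗ[Fq] (Fin m → Fq) := ev ∘ₗ rep
  let ψ : (Fin m → Fq) →ₗ[Fq] K :=
    (Polynomial.aeval pb.gen).toLinearMap ∘ₗ Lagrange.interpolate Finset.univ a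
  have hπ : ∀ (α : K) (j : Fin m), π α j = (rep α).eval (a j) := fun _ _ => rfl
  -- product of π's is evaluation of product of reps
  have hprod : ∀ α : Fin d → K, (∏ i, π (α i)) = ev (∏ i, rep (α i)) := by
    intro α
    funext j
    rw [hev, Polynomial.eval_prod, Finset.prod_apply]
    exact Finset.prod_congr rfl fun i _ => hπ (α i) j
  have hnd : ∀ α : Fin d → K, (∏ i, rep (α i)).natDegree ≤ d * (k - 1) := by
    intro α
    calc (∏ i, rep (α i)).natDegree ≤ ∑ i, (rep (α i)).natDegree :=
          Polynomial.natDegree_prod_le _ _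
      _ ≤ ∑ _i : Fin d, (k - 1) := Finset.sum_le_sum fun i _ => hrep_nd (α i)
      _ = d * (k - 1) := by simp [Finset.sum_const, mul_comm]
  have hdegm : ∀ α : Fin d → K, (∏ i, rep (α i)).degree < (m : WithBot ℕ) := by
    intro α
    refine lt_of_le_of_lt (Polynomial.degree_le_natDegree) ?_
    exact_mod_cast Nat.lt_of_le_of_lt (hnd α) hm1
  -- ψ inverts ev on low-degree polynomials
  have hψev : ∀ Q : Polynomial Fq, Q.degree < (m : WithBot ℕ) →
      ψ (ev Q) = Polynomial.aeval pb.gen Q := by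
    intro Q hQ
    have hcard' : (Finset.univ : Finset (Fin m)).card = m := by simp
    have : Q = Lagrange.interpolate Finset.univ a fun j => Q.eval (a j) := by
      refine Lagrange.eq_interpolate ha_inj ?_
      rwa [hcard']
    show Polynomial.aeval pb.gen (Lagrange.interpolate Finset.univ a (ev Q)) = _
    conv_rhs => rw [this]
    rfl
  -- the pair
  refine ⟨π, ψ, ⟨?_, ?_⟩, ?_⟩
  · -- π 1 = 1
    have h1 : (1 : K) = b ⟨0, hk⟩ := by rw [hb]; simp
    have hrep1 : rep 1 = Polynomial.monomial 0 1 := by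
      rw [h1, hrep_def]
      have : ∀ i : Fin k, b.equivFun (b ⟨0, hk⟩) i = if (⟨0, hk⟩ : Fin k) = i then 1 else 0 :=
        fun i => b.equivFun_self _ _
      rw [Finset.sum_congr rfl fun i _ => by rw [this i]]
      simp [apply_ite (Polynomial.monomial _), Finset.sum_ite_eq]
    funext j
    rw [Pi.one_apply, hπ, hrep1]
    simp
  · -- multiplication property
    intro α
    rw [hprod, hψev _ (hdegm α), map_prod]
    exact Finset.prod_congr rfl fun i _ => hrep_eval (α i)
  · -- weight bound
    intro v hv hv0
    have hsub : Submodule.span Fq {w : Fin m → Fq | ∃ α : Fin d → K, w = ∏ i, π (α i)} ≤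
        Submodule.map ev (Polynomial.degreeLT Fq (d * (k - 1) + 1)) := by
      rw [Submodule.span_le]
      rintro w ⟨α, rfl⟩
      refine ⟨∏ i, rep (α i), ?_, (hprod α).symm⟩
      rw [SetLike.mem_coe, Polynomial.mem_degreeLT]
      refine lt_of_le_of_lt (Polynomial.degree_le_natDegree) ?_
      exact_mod_cast Nat.lt_succ_of_le (hnd α)
    obtain ⟨Q, hQmem, rfl⟩ := hsub hv
    have hQ0 : Q ≠ 0 := by
      rintro rfl
      exact hv0 (map_zero ev)
    have hQnd : Q.natDegree ≤ d * (k - 1) := by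
      have h1 := Polynomial.mem_degreeLT.mp hQmem
      have h2 := (Polynomial.natDegree_lt_iff_degree_lt hQ0).mpr h1
      omega
    -- count zeros
    have hzero : (Finset.univ.filter fun j : Fin m => ev Q j = 0).card ≤ d * (k - 1) := by
      calc (Finset.univ.filter fun j : Fin m => ev Q j = 0).card
          ≤ Q.roots.toFinset.card := by
            refine Finset.card_le_card_of_injOn a ?_ ?_
            · intro j hj
              rw [Finset.mem_coe, Finset.mem_filter] at hj
              rw [Finset.mem_coe, Multiset.mem_toFinset, Polynomial.mem_roots']
              exact ⟨hQ0, hj.2⟩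
            · exact fun x _ y _ h => a.injective h
        _ ≤ Multiset.card Q.roots := Multiset.toFinset_card_le _
        _ ≤ Q.natDegree := Polynomial.card_roots' Q
        _ ≤ d * (k - 1) := hQnd
    have hham : hammingNorm (ev Q) = (Finset.univ.filter fun j : Fin m => ¬ (ev Q j = 0)).card := by
      simp [hammingNorm]
    have hsplit := Finset.card_filter_add_card_filter_not
      (s := (Finset.univ : Finset (Fin m))) (p := fun j => ev Q j = 0)
    rw [Finset.card_univ, Fintype.card_fin] at hsplit
    omega
end

section
/- Let K be a field, let d ≥ 1 be an integer, and let a_1, ..., a_n be a d-Sidon sequence. If F ∈ K[x_1, ..., x_n] is a nonzero multivariate polynomial of total degree at most d, then the univariate polynomial F(x^{a_1}, x^{a_2}, ..., x^{a_n}) ∈ K[x], obtained by substituting x^{a_i} for x_i, is nonzero and has degree at most d · max_{1≤i≤n} a_i. -/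
lemma aeval_pow_eq {K : Type*} [Field K] {n : ℕ} (a : Fin n → ℕ)
    (F : MvPolynomial (Fin n) K) :
    MvPolynomial.aeval (fun i => (Polynomial.X : Polynomial K) ^ a i) F =
      ∑ m ∈ F.support, Polynomial.C (F.coeff m) *
        Polynomial.X ^ (∑ k, m k * a k) := by
  conv_lhs => rw [F.as_sum]
  rw [map_sum]
  refine Finset.sum_congr rfl fun m _ => ?_
  rw [MvPolynomial.aeval_monomial]
  congr 1
  rw [Finsupp.prod_fintype _ _ (fun i => pow_zero _)]
  simp_rw [← pow_mul, ← Finset.prod_pow_eq_pow_sum]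
  exact Finset.prod_congr rfl fun k _ => by ring_nf

lemma wt_le {K : Type*} [Field K] {n : ℕ} {F : MvPolynomial (Fin n) K}
    {m : Fin n →₀ ℕ} (hm : m ∈ F.support) : (∑ k, m k) ≤ F.totalDegree := by
  have := MvPolynomial.le_totalDegree hm
  rwa [Finsupp.sum_fintype _ _ (fun _ => rfl)] at this

theorem stmt_6 (K : Type*) [Field K] (d : ℕ) (hd : 1 ≤ d) {n : ℕ}
    (a : Fin n → ℕ) (ha : IsSidonSeq d a)
    (F : MvPolynomial (Fin n) K) (hF : F ≠ 0) (hdeg : F.totalDegree ≤ d) :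
    MvPolynomial.aeval (fun i => (Polynomial.X : Polynomial K) ^ a i) F ≠ 0 ∧
    (MvPolynomial.aeval (fun i => (Polynomial.X : Polynomial K) ^ a i) F).natDegree
      ≤ d * Finset.univ.sup a := by
  rw [aeval_pow_eq]
  constructor
  · -- nonzero
    obtain ⟨m0, hm0⟩ := (MvPolynomial.support_nonempty.mpr hF)
    intro h
    have hc : Polynomial.coeff (∑ m ∈ F.support, Polynomial.C (F.coeff m) *
        Polynomial.X ^ (∑ k, m k * a k)) (∑ k, m0 k * a k) = F.coeff m0 := by
      rw [Polynomial.finset_sum_coeff]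
      rw [Finset.sum_eq_single m0]
      · simp
      · intro m hm hne
        rw [Polynomial.coeff_C_mul, Polynomial.coeff_X_pow, if_neg (Ne.symm ?_), mul_zero]
        exact ha m m0 (le_trans (wt_le hm) hdeg) (le_trans (wt_le hm0) hdeg)
          (fun h' => hne (DFunLike.coe_injective h'))
      · intro h'; exact absurd hm0 h'
    rw [h] at hc
    exact MvPolynomial.mem_support_iff.mp hm0 hc.symm
  · refine Polynomial.natDegree_sum_le_of_forall_le _ _ fun m hm => ?_
    refine le_trans (Polynomial.natDegree_C_mul_le _ _) ?_
    refine le_trans (Polynomial.natDegree_X_pow_le _) ?_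
    calc ∑ k, m k * a k ≤ ∑ k, m k * Finset.univ.sup a :=
          Finset.sum_le_sum fun k _ => Nat.mul_le_mul_left _ (Finset.le_sup (Finset.mem_univ k))
      _ = (∑ k, m k) * Finset.univ.sup a := by rw [Finset.sum_mul]
      _ ≤ d * Finset.univ.sup a :=
          Nat.mul_le_mul_right _ (le_trans (wt_le hm) hdeg)
end

section
/- Let q be a prime power, let d ≥ 1 be an integer, and let a_1, ..., a_n be a d-Sidon sequence with max_{1≤i≤n} a_i ≤ L and dL < q. Let T be the multiset {(β^{a_1}, β^{a_2}, ..., β^{a_n}) : β ∈ F_q} of q points in F_q^n. Then the punctured Reed–Muller code RM_q(n,d)|_T is an F_q-linear code of length q, dimension binom(n+d, n), and minimum distance at least q − dL. -/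
/-- The punctured Reed–Muller code `RM_q(n,d)|_T`: the evaluations of all `n`-variate
polynomials of total degree at most `d` at the (multi)set of points `T`. -/
noncomputable def puncturedRM (Fq : Type*) [Field Fq] (n d : ℕ) {ι : Type*}
    (T : ι → (Fin n → Fq)) : Submodule Fq (ι → Fq) :=
  (MvPolynomial.restrictTotalDegree (Fin n) Fq d).map
    (LinearMap.pi fun j => (MvPolynomial.aeval (T j)).toLinearMap)

noncomputable section

open MvPolynomial Polynomial Finset

/-- substitution x_i ↦ X^{a i} -/
def sidonSub {Fq : Type*} [Field Fq] {n : ℕ} (a : Fin n → ℕ) :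
    MvPolynomial (Fin n) Fq →ₐ[Fq] Polynomial Fq :=
  MvPolynomial.aeval fun i => (Polynomial.X : Polynomial Fq) ^ a i

lemma sidonSub_eval {Fq : Type*} [Field Fq] {n : ℕ} (a : Fin n → ℕ)
    (F : MvPolynomial (Fin n) Fq) (β : Fq) :
    (sidonSub a F).eval β = MvPolynomial.aeval (fun i => β ^ a i) F := by
  have h : (Polynomial.aeval β).comp (sidonSub (Fq := Fq) a)
      = MvPolynomial.aeval fun i => β ^ a i := by
    apply MvPolynomial.algHom_ext
    intro i
    simp [sidonSub]
  have := DFunLike.congr_fun h F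
  simpa [Polynomial.coe_aeval_eq_eval] using this

lemma sidonSub_eq_sum {Fq : Type*} [Field Fq] {n : ℕ} (a : Fin n → ℕ)
    (F : MvPolynomial (Fin n) Fq) :
    sidonSub a F = ∑ m ∈ F.support,
      Polynomial.C (MvPolynomial.coeff m F) * Polynomial.X ^ (∑ i, m i * a i) := by
  rw [sidonSub, MvPolynomial.aeval_def, MvPolynomial.eval₂_eq]
  refine Finset.sum_congr rfl fun m _ => ?_
  rw [Polynomial.algebraMap_eq]
  congr 1
  rw [Finset.prod_congr rfl (fun i _ => (pow_mul _ (a i) (m i)).symm),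
    Finset.prod_pow_eq_pow_sum]
  congr 1
  rw [Finset.sum_subset (Finset.subset_univ m.support)]
  · exact Finset.sum_congr rfl fun i _ => mul_comm _ _
  · intro i _ hi
    simp [Finsupp.notMem_support_iff.mp hi]

lemma support_sum_le {Fq : Type*} [Field Fq] {n : ℕ} {d : ℕ}
    {F : MvPolynomial (Fin n) Fq} (hF : F.totalDegree ≤ d)
    {m : Fin n →₀ ℕ} (hm : m ∈ F.support) : (∑ k, m k) ≤ d := by
  have := MvPolynomial.le_totalDegree (p := F) hm
  rw [Finsupp.sum_fintype _ _ (fun _ => rfl)] at this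
  exact this.trans hF

lemma sidonSub_natDegree_le {Fq : Type*} [Field Fq] {n : ℕ} (d : ℕ) (a : Fin n → ℕ)
    (L : ℕ) (haL : ∀ i, a i ≤ L)
    (F : MvPolynomial (Fin n) Fq) (hF : F.totalDegree ≤ d) :
    (sidonSub a F).natDegree ≤ d * L := by
  rw [sidonSub_eq_sum]
  refine (Polynomial.natDegree_sum_le _ _).trans ?_
  rw [Finset.fold_max_le]
  refine ⟨Nat.zero_le _, fun m hm => ?_⟩
  refine (Polynomial.natDegree_C_mul_le _ _).trans ?_
  rw [Polynomial.natDegree_X_pow]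
  calc ∑ i, m i * a i ≤ ∑ i, m i * L :=
        Finset.sum_le_sum fun i _ => Nat.mul_le_mul_left _ (haL i)
    _ = (∑ i, m i) * L := (Finset.sum_mul ..).symm
    _ ≤ d * L := Nat.mul_le_mul_right _ (support_sum_le hF hm)

lemma sidonSub_ne_zero {Fq : Type*} [Field Fq] {n : ℕ} (d : ℕ) (a : Fin n → ℕ)
    (ha : IsSidonSeq d a)
    (F : MvPolynomial (Fin n) Fq) (hF : F.totalDegree ≤ d) (hF0 : F ≠ 0) :
    sidonSub a F ≠ 0 := by
  obtain ⟨m0, hm0⟩ := (MvPolynomial.support_nonempty.mpr hF0)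
  intro h
  have hc : (sidonSub a F).coeff (∑ i, m0 i * a i) = MvPolynomial.coeff m0 F := by
    rw [sidonSub_eq_sum, Polynomial.finset_sum_coeff]
    rw [Finset.sum_eq_single m0]
    · simp
    · intro m hm hne
      have hws : (∑ i, m i * a i) ≠ (∑ i, m0 i * a i) :=
        ha m m0 (support_sum_le hF hm) (support_sum_le hF hm0)
          (fun hc => hne (DFunLike.coe_injective hc))
      simp [Polynomial.coeff_C_mul, Polynomial.coeff_X_pow, Ne.symm hws]
    · intro h; exact absurd hm0 h
  rw [h] at hc
  exact (MvPolynomial.mem_support_iff.mp hm0) (by simpa using hc.symm)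


noncomputable def sidonEqv1 (n d : ℕ) : {m : Fin n →₀ ℕ // (m.sum fun _ e => e) ≤ d} ≃
    {f : Fin n → ℕ // (∑ i, f i) ≤ d} :=
  Finsupp.equivFunOnFinite.subtypeEquiv fun m => by
    rw [Finsupp.sum_fintype _ _ (fun _ => rfl)]; rfl

def sidonEqv2 (n d : ℕ) : {f : Fin n → ℕ // (∑ i, f i) ≤ d} ≃
    {g : Fin (n+1) → ℕ // (∑ i, g i) = d} where
  toFun f := ⟨Fin.snoc f.1 (d - ∑ i, f.1 i), by
    rw [Fin.sum_univ_castSucc]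
    simp only [Fin.snoc_castSucc, Fin.snoc_last]
    have := f.2; omega⟩
  invFun g := ⟨fun i => g.1 i.castSucc, by
    have := g.2; rw [Fin.sum_univ_castSucc] at this; exact Nat.le.intro this⟩
  left_inv f := by
    apply Subtype.ext; funext i; simp
  right_inv g := by
    apply Subtype.ext; funext i
    refine Fin.lastCases ?_ (fun j => ?_) i
    · simp only [Fin.snoc_last, Fin.snoc_castSucc]
      have := g.2; rw [Fin.sum_univ_castSucc] at this
      show d - ∑ i : Fin n, g.1 i.castSucc = g.1 (Fin.last n)
      omega
    · simp
noncomputable def sidonEqv3 (n d : ℕ) : {g : Fin (n+1) → ℕ // (∑ i, g i) = d} ≃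
    {m : Fin (n+1) →₀ ℕ // (m.sum fun _ e => e) = d} :=
  (Finsupp.equivFunOnFinite.subtypeEquiv fun m => by
    rw [Finsupp.sum_fintype _ _ (fun _ => rfl)]; rfl).symm

def sidonEqv4 (n d : ℕ) : {m : Fin (n+1) →₀ ℕ // (m.sum fun _ e => e) = d} ≃
    Sym (Fin (n+1)) d :=
  (Finsupp.orderIsoMultiset (ι := Fin (n+1))).toEquiv.subtypeEquiv fun m => by
    rw [show ((Finsupp.orderIsoMultiset (ι := Fin (n+1))).toEquiv m) = Finsupp.toMultiset m from rfl,
      Finsupp.card_toMultiset]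
    rfl

noncomputable def sidonCountEquiv (n d : ℕ) : {m : Fin n →₀ ℕ // (m.sum fun _ e => e) ≤ d} ≃
    Sym (Fin (n+1)) d :=
  ((sidonEqv1 n d).trans (sidonEqv2 n d)).trans ((sidonEqv3 n d).trans (sidonEqv4 n d))

lemma sidon_card (n d : ℕ) [Fintype {m : Fin n →₀ ℕ // (m.sum fun _ e => e) ≤ d}] :
    Fintype.card {m : Fin n →₀ ℕ // (m.sum fun _ e => e) ≤ d} = (n + d).choose n := by
  rw [Fintype.card_congr (sidonCountEquiv n d), Sym.card_sym_eq_choose, Fintype.card_fin]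
  rw [show n + 1 + d - 1 = n + d from by omega,
    show (n+d).choose n = (n+d).choose d from by
      rw [← Nat.choose_symm (Nat.le_add_left d n), Nat.add_sub_cancel]]


theorem stmt_7 (q : ℕ) (hq : IsPrimePow q) (d : ℕ) (hd : 1 ≤ d) {n : ℕ}
    (Fq : Type*) [Field Fq] [Fintype Fq] [DecidableEq Fq] (hcq : Fintype.card Fq = q)
    (a : Fin n → ℕ) (ha : IsSidonSeq d a)
    (L : ℕ) (haL : ∀ i, a i ≤ L) (hLq : d * L < q) :
    Module.finrank Fq (puncturedRM Fq n d (fun (β : Fq) (i : Fin n) => β ^ a i))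
        = (n + d).choose n ∧
      ∀ c ∈ puncturedRM Fq n d (fun (β : Fq) (i : Fin n) => β ^ a i), c ≠ 0 →
        q - d * L ≤ hammingNorm c := by
  classical
  set T : Fq → Fin n → Fq := fun β i => β ^ a i with hT
  set E : MvPolynomial (Fin n) Fq →ₗ[Fq] (Fq → Fq) :=
    LinearMap.pi fun β => (MvPolynomial.aeval (T β)).toLinearMap with hE
  have key : ∀ F : MvPolynomial (Fin n) Fq, F.totalDegree ≤ d → F ≠ 0 →
      q - d * L ≤ hammingNorm (E F) ∧ E F ≠ 0 := by
    intro F hFd hF0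
    have hP0 : sidonSub a F ≠ 0 := sidonSub_ne_zero d a ha F hFd hF0
    have hPdeg : (sidonSub a F).natDegree ≤ d * L := sidonSub_natDegree_le d a L haL F hFd
    have hEv : ∀ β : Fq, E F β = (sidonSub a F).eval β := fun β => (sidonSub_eval a F β).symm
    have hZ : (Finset.univ.filter fun β : Fq => E F β = 0).card ≤ d * L := by
      calc (Finset.univ.filter fun β : Fq => E F β = 0).card
          ≤ ((sidonSub a F).roots.toFinset).card := by
            apply Finset.card_le_card
            intro β hβ
            rw [Finset.mem_filter] at hβ
            rw [Multiset.mem_toFinset, Polynomial.mem_roots hP0, Polynomial.IsRoot, ← hEv]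
            exact hβ.2
        _ ≤ Multiset.card (sidonSub a F).roots := Multiset.toFinset_card_le _
        _ ≤ (sidonSub a F).natDegree := Polynomial.card_roots' _
        _ ≤ d * L := hPdeg
    have hsplit := Finset.card_filter_add_card_filter_not
      (s := (Finset.univ : Finset Fq)) (p := fun β => E F β = 0)
    have hnorm : hammingNorm (E F) = (Finset.univ.filter fun β : Fq => ¬ (E F β = 0)).card := by
      simp only [hammingNorm, ne_eq]
    rw [Finset.card_univ, hcq] at hsplit
    constructor
    · rw [hnorm]; omega
    · intro h
      rw [h] at hZ
      simp only [Pi.zero_apply, Finset.filter_true, Finset.card_univ] at hZ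
      rw [hcq] at hZ
      omega
  refine ⟨?_, ?_⟩
  · -- dimension
    set S := MvPolynomial.restrictTotalDegree (Fin n) Fq d with hS
    have h0 : ∀ F : S, E F.1 = 0 → F = 0 := by
      intro F h
      by_contra hF
      have hF1 : (F : MvPolynomial (Fin n) Fq) ≠ 0 := fun hc => hF (Subtype.ext hc)
      have hdeg : (F : MvPolynomial (Fin n) Fq).totalDegree ≤ d :=
        (MvPolynomial.mem_restrictTotalDegree _ _ _).mp F.2
      exact (key F.1 hdeg hF1).2 h
    have hinj : Function.Injective (E.comp S.subtype) :=
      LinearMap.ker_eq_bot.mp (LinearMap.ker_eq_bot'.mpr fun F h => h0 F h)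
    have hrange : LinearMap.range (E.comp S.subtype) = puncturedRM Fq n d T := by
      rw [LinearMap.range_comp, Submodule.range_subtype]
      rfl
    have hrk : Module.finrank Fq (puncturedRM Fq n d T) = Module.finrank Fq S := by
      rw [← hrange]
      exact LinearMap.finrank_range_of_inj hinj
    rw [hrk]
    letI F1 : Fintype {m : Fin n →₀ ℕ // (m.sum fun _ e => e) ≤ d} :=
      Fintype.ofEquiv _ (sidonCountEquiv n d).symm
    letI F2 : Fintype ↑{m : Fin n →₀ ℕ | (m.sum fun _ e => e) ≤ d} := F1
    exact (Module.finrank_eq_card_basis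
      (MvPolynomial.basisRestrictSupport Fq {m : Fin n →₀ ℕ | (m.sum fun _ e => e) ≤ d})).trans
      (sidon_card n d)
  · -- min distance
    intro c hc hc0
    obtain ⟨F, hFS, hFc⟩ := Submodule.mem_map.mp hc
    have hdeg : F.totalDegree ≤ d := (MvPolynomial.mem_restrictTotalDegree _ _ _).mp hFS
    have hF0 : F ≠ 0 := by
      rintro rfl
      exact hc0 (by simpa using hFc.symm)
    have := (key F hdeg hF0).1
    rwa [show E F = c from hFc] at this

end
end

section
/- There exist an absolute constant C > 0 and, for each positive integer d, a constant c_d > 0 such that the following holds: for every ε ∈ (0,1), every prime power q that is a perfect square (q = r^2), and all positive integers n, d with d ≤ ε(√q − 1)/2 − 1, there exists a finite multiset T_1 of points in F_q^n, of some size N, such that the punctured Reed–Muller code RM_q(n,d)|_{T_1} is an F_q-linear code of length N and dimension binom(n+d, n) whose relative minimum distance is at least 1 − ε, whose rate satisfies binom(n+d, n)/N ≥ c_d · ε/d!, and which is (1 − √ε, C/ε)-list decodable. -/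
/-- A code `C ⊆ Σ^ι` is `(ρ, L)`-list decodable if for every received word `y`, the set of
codewords within Hamming distance `ρ * |ι|` of `y` is finite of size at most `L`. -/
def ListDecodable {ι F : Type*} [Fintype ι] [DecidableEq F]
    (C : Set (ι → F)) (ρ : ℝ) (L : ℝ) : Prop :=
  ∀ y : ι → F,
    {c ∈ C | (hammingDist c y : ℝ) ≤ ρ * Fintype.card ι}.Finite ∧
    (({c ∈ C | (hammingDist c y : ℝ) ≤ ρ * Fintype.card ι}).ncard : ℝ) ≤ L

section Aux

open Finset MvPolynomial

lemma pow_self_le_exp_mul_factorial : ∀ t : ℕ, (t:ℝ)^t ≤ Real.exp 1 ^ t * t.factorial := by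
  intro t
  induction t with
  | zero => simp
  | succ t ih =>
    push_cast
    rcases Nat.eq_zero_or_pos t with rfl | ht
    · norm_num
    · have htR : (0:ℝ) < t := by exact_mod_cast ht
      have h1 : ((t:ℝ)+1)^t ≤ Real.exp 1 * (t:ℝ)^t := by
        have he : ((t:ℝ)+1) = (t:ℝ) * (1 + 1/t) := by field_simp
        rw [he, mul_pow]
        have h2 : (1 + 1/(t:ℝ))^t ≤ (Real.exp (1/t))^t := by
          apply pow_le_pow_left₀ (by positivity)
          linarith [Real.add_one_le_exp (1/(t:ℝ))]
        have h3 : (Real.exp (1/(t:ℝ)))^t = Real.exp 1 := by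
          rw [← Real.exp_nat_mul]
          congr 1; field_simp
        nlinarith [pow_nonneg (le_of_lt htR) t, h2, h3]
      calc ((t:ℝ)+1)^(t+1) = ((t:ℝ)+1)^t * ((t:ℝ)+1) := by ring
        _ ≤ (Real.exp 1 * (t:ℝ)^t) * ((t:ℝ)+1) := by
            apply mul_le_mul_of_nonneg_right h1 (by positivity)
        _ ≤ (Real.exp 1 * (Real.exp 1 ^ t * t.factorial)) * ((t:ℝ)+1) := by
            have := Real.exp_pos (1:ℝ)
            apply mul_le_mul_of_nonneg_right _ (by positivity)
            nlinarith [ih, Real.exp_pos (1:ℝ)]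
        _ = Real.exp 1 ^ (t+1) * (t+1).factorial := by
            rw [Nat.factorial_succ]; push_cast; ring

lemma choose_le_real (N t : ℕ) (ht : 0 < t) : (N.choose t : ℝ) ≤ (3*N/t)^t := by
  have htR : (0:ℝ) < t := by exact_mod_cast ht
  have h1 : (t.factorial : ℝ) * N.choose t ≤ (N:ℝ)^t := by
    rw [← Nat.cast_mul, ← Nat.descFactorial_eq_factorial_mul_choose]
    exact_mod_cast Nat.descFactorial_le_pow N t
  have h2 : (t:ℝ)^t ≤ Real.exp 1 ^ t * t.factorial := pow_self_le_exp_mul_factorial t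
  have he : Real.exp 1 ≤ 3 := by
    have := Real.exp_one_lt_d9; linarith
  have hfac : (0:ℝ) < t.factorial := by exact_mod_cast t.factorial_pos
  rw [div_pow]
  rw [le_div_iff₀ (by positivity)]
  calc (N.choose t : ℝ) * t^t ≤ N.choose t * (Real.exp 1 ^ t * t.factorial) := by
        apply mul_le_mul_of_nonneg_left h2 (by positivity)
    _ = (t.factorial * N.choose t) * Real.exp 1 ^ t := by ring
    _ ≤ (N:ℝ)^t * 3^t := by
        apply mul_le_mul h1 (pow_le_pow_left₀ (le_of_lt (Real.exp_pos 1)) he t) (by positivity) (by positivity)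
    _ = (3*N:ℝ)^t := by rw [mul_pow]; ring

lemma schwartz_zippel {F : Type*} [Field F] [Fintype F] [DecidableEq F] :
    ∀ (n : ℕ) (p : MvPolynomial (Fin n) F), p ≠ 0 →
      Fintype.card {x : Fin n → F // MvPolynomial.eval x p = 0} * Fintype.card F
        ≤ p.totalDegree * Fintype.card F ^ n := by
  intro n
  induction n with
  | zero =>
    intro p hp
    have : IsEmpty {x : Fin 0 → F // MvPolynomial.eval x p = 0} := by
      constructor
      rintro ⟨x, hx⟩
      obtain ⟨a, rfl⟩ := MvPolynomial.C_surjective (Fin 0) p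
      simp at hx
      exact hp (by simp [hx])
    simp [Fintype.card_eq_zero]
  | succ n ih =>
    intro p hp
    set q := Fintype.card F with hq
    set p' := finSuccEquiv F n p with hp'
    have hp'0 : p' ≠ 0 := by
      rw [hp']
      exact fun h => hp ((map_eq_zero_iff (finSuccEquiv F n) (AlgEquiv.injective _)).mp h)
    set ℓ := p'.natDegree with hℓ
    set g := p'.leadingCoeff with hg
    have hg0 : g ≠ 0 := Polynomial.leadingCoeff_ne_zero.mpr hp'0
    have hgd : g.totalDegree + ℓ ≤ p.totalDegree := by
      apply totalDegree_coeff_finSuccEquiv_add_le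
      exact hg0
    have key : Fintype.card {x : Fin (n+1) → F // MvPolynomial.eval x p = 0}
        = ∑ s : Fin n → F, Fintype.card {y : F // MvPolynomial.eval (Fin.cons y s) p = 0} := by
      rw [← Fintype.card_sigma]
      apply Fintype.card_congr
      have e1 : {x : Fin (n+1) → F // MvPolynomial.eval x p = 0}
          ≃ {z : F × (Fin n → F) // MvPolynomial.eval (Fin.cons z.1 z.2) p = 0} :=
        ((Fin.consEquiv (fun _ => F)).subtypeEquiv (fun z => Iff.rfl)).symm
      have e2 : {z : F × (Fin n → F) // MvPolynomial.eval (Fin.cons z.1 z.2) p = 0}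
          ≃ {w : (Fin n → F) × F // MvPolynomial.eval (Fin.cons w.2 w.1) p = 0} :=
        (Equiv.prodComm _ _).subtypeEquiv (fun z => Iff.rfl)
      exact (e1.trans e2).trans
        (Equiv.subtypeProdEquivSigmaSubtype fun (s : Fin n → F) (y : F) =>
          MvPolynomial.eval (Fin.cons y s) p = 0)
    set B := (Finset.univ.filter fun s : Fin n → F => MvPolynomial.eval s g = 0).card with hB
    have hbound : ∀ s : Fin n → F,
        Fintype.card {y : F // MvPolynomial.eval (Fin.cons y s) p = 0}
          ≤ if MvPolynomial.eval s g = 0 then q else ℓ := by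
      intro s
      split_ifs with hs
      · exact Fintype.card_subtype_le _
      · set qs := Polynomial.map (MvPolynomial.eval s) p' with hqs
        have hqs0 : qs ≠ 0 := by
          intro h
          apply hs
          have hc : qs.coeff ℓ = MvPolynomial.eval s g := by
            rw [hqs, Polynomial.coeff_map]; rfl
          rw [h] at hc
          simpa using hc.symm
        have h1 : Fintype.card {y : F // MvPolynomial.eval (Fin.cons y s) p = 0}
            ≤ qs.roots.toFinset.card := by
          rw [Fintype.card_subtype]
          apply Finset.card_le_card
          intro y hy
          simp only [Finset.mem_filter] at hy
          rw [Multiset.mem_toFinset, Polynomial.mem_roots hqs0]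
          have := hy.2
          rw [eval_eq_eval_mv_eval' s y p] at this
          exact this
        calc Fintype.card {y : F // MvPolynomial.eval (Fin.cons y s) p = 0}
            ≤ qs.roots.toFinset.card := h1
          _ ≤ Multiset.card qs.roots := Multiset.toFinset_card_le _
          _ ≤ qs.natDegree := Polynomial.card_roots' qs
          _ ≤ ℓ := Polynomial.natDegree_map_le
    have hZ : Fintype.card {x : Fin (n+1) → F // MvPolynomial.eval x p = 0}
        ≤ B * q + ℓ * q^n := by
      rw [key]
      calc ∑ s : Fin n → F, Fintype.card {y : F // MvPolynomial.eval (Fin.cons y s) p = 0}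
          ≤ ∑ s : Fin n → F, (if MvPolynomial.eval s g = 0 then q else ℓ) :=
            Finset.sum_le_sum fun s _ => hbound s
        _ = B * q + (Finset.univ.filter fun s : Fin n → F =>
              ¬ MvPolynomial.eval s g = 0).card * ℓ := by
            rw [Finset.sum_ite, Finset.sum_const, Finset.sum_const, smul_eq_mul, smul_eq_mul]
        _ ≤ B * q + ℓ * q^n := by
            have key2 : (Finset.univ.filter fun s : Fin n → F =>
                ¬ MvPolynomial.eval s g = 0).card ≤ q^n := by
              calc _ ≤ Finset.univ.card := Finset.card_filter_le _ _
                _ = q^n := by simp [hq, Fintype.card_fun]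
            have key3 : (Finset.univ.filter fun s : Fin n → F =>
                ¬ MvPolynomial.eval s g = 0).card * ℓ ≤ ℓ * q^n := by
              calc (Finset.univ.filter fun s : Fin n → F =>
                ¬ MvPolynomial.eval s g = 0).card * ℓ ≤ q^n * ℓ := Nat.mul_le_mul_right _ key2
                _ = ℓ * q^n := mul_comm _ _
            omega
    have hIH : B * q ≤ g.totalDegree * q^n := by
      have := ih g hg0
      rwa [Fintype.card_subtype] at this
    calc Fintype.card {x : Fin (n+1) → F // MvPolynomial.eval x p = 0} * q
        ≤ (B * q + ℓ * q^n) * q := Nat.mul_le_mul_right _ hZ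
      _ = B * q * q + ℓ * q^(n+1) := by ring
      _ ≤ g.totalDegree * q^n * q + ℓ * q^(n+1) := by
          exact Nat.add_le_add_right (Nat.mul_le_mul_right _ hIH) _
      _ = (g.totalDegree + ℓ) * q^(n+1) := by ring
      _ ≤ p.totalDegree * q^(n+1) := Nat.mul_le_mul_right _ hgd

lemma card_degree_le_equiv (n d : ℕ) :
    Nonempty ({m : Fin n →₀ ℕ // (m.sum fun _ e => e) ≤ d} ≃ Sym (Fin (n+1)) d) := by
  have E1 : {m : Fin n →₀ ℕ // (m.sum fun _ e => e) ≤ d}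
      ≃ {m : Fin (n+1) →₀ ℕ // (m.sum fun _ e => e) = d} :=
    { toFun := fun m => ⟨Finsupp.cons (d - m.1.sum fun _ e => e) m.1, by
        rw [Finsupp.sum_cons]; have := m.2; omega⟩
      invFun := fun t => ⟨Finsupp.tail t.1, by
        have h := t.2
        rw [← Finsupp.cons_tail t.1, Finsupp.sum_cons] at h
        omega⟩
      left_inv := fun m => by
        ext1; exact Finsupp.tail_cons _ _
      right_inv := fun t => by
        ext1
        have h := t.2
        rw [← Finsupp.cons_tail t.1, Finsupp.sum_cons] at h
        have h2 : (d - ((Finsupp.tail t.1).sum fun _ e => e)) = t.1 0 := by omega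
        show Finsupp.cons (d - ((Finsupp.tail t.1).sum fun _ e => e)) (Finsupp.tail t.1) = t.1
        rw [h2, Finsupp.cons_tail] }
  have E2 : {m : Fin (n+1) →₀ ℕ // (m.sum fun _ e => e) = d} ≃ Sym (Fin (n+1)) d :=
    { toFun := fun m => ⟨Finsupp.toMultiset m.1, by
        rw [Finsupp.card_toMultiset]; exact m.2⟩
      invFun := fun s => ⟨Multiset.toFinsupp s.1, by
        show ((Multiset.toFinsupp s.1).sum fun _ => id) = d
        rw [← Finsupp.card_toMultiset, Multiset.toFinsupp_toMultiset]
        exact s.2⟩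
      left_inv := fun m => by ext1; simp
      right_inv := fun s => by ext1; simp }
  exact ⟨E1.trans E2⟩

lemma finrank_restrictTotalDegree' (F : Type*) [Field F] (n d : ℕ) :
    Module.finrank F (MvPolynomial.restrictTotalDegree (Fin n) F d) = (n + d).choose n := by
  obtain ⟨e⟩ := card_degree_le_equiv n d
  letI : Fintype {m : Fin n →₀ ℕ // (m.sum fun _ e => e) ≤ d} := Fintype.ofEquiv _ e.symm
  letI : Fintype ({ m : Fin n →₀ ℕ | (m.sum fun _ e => e) ≤ d} : Set (Fin n →₀ ℕ)) :=
    Fintype.ofEquiv _ e.symm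
  have b : Module.Basis ({ m : Fin n →₀ ℕ | (m.sum fun _ e => e) ≤ d} : Set (Fin n →₀ ℕ))
      F (MvPolynomial.restrictTotalDegree (Fin n) F d) :=
    MvPolynomial.basisRestrictSupport F _
  rw [Module.finrank_eq_card_basis b]
  have : Fintype.card ({ m : Fin n →₀ ℕ | (m.sum fun _ e => e) ≤ d} : Set (Fin n →₀ ℕ))
      = Fintype.card (Sym (Fin (n+1)) d) := Fintype.card_congr e
  rw [this, Sym.card_sym_eq_choose, Fintype.card_fin]
  have h1 : n + 1 + d - 1 = d + n := by omega
  rw [h1, Nat.choose_symm_add]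
  rw [Nat.add_comm d n]

lemma johnson {N : ℕ} {Fq : Type*} [Fintype Fq] [DecidableEq Fq]
    (C : Set (Fin N → Fq)) (ε : ℝ) (hε : 0 < ε) (hN : 0 < N)
    (hpair : ∀ c ∈ C, ∀ c' ∈ C, c ≠ c' →
      ((Finset.univ.filter fun j => c j = c' j).card : ℝ) ≤ 2/3 * ε * N) :
    ListDecodable C (1 - Real.sqrt ε) (3 / ε) := by
  intro y
  classical
  set S := {c ∈ C | (hammingDist c y : ℝ) ≤ (1 - Real.sqrt ε) * Fintype.card (Fin N)} with hS
  have hfin : S.Finite := Set.toFinite _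
  refine ⟨hfin, ?_⟩
  set s := hfin.toFinset with hs
  have hcard : S.ncard = s.card := Set.ncard_eq_toFinset_card _ hfin
  set L := s.card with hL
  set A : (Fin N → Fq) → Finset (Fin N) := fun c => univ.filter fun j => c j = y j with hA
  have h1 : ∀ c ∈ s, Real.sqrt ε * N ≤ ((A c).card : ℝ) := by
    intro c hc
    rw [hs, Set.Finite.mem_toFinset] at hc
    have hdist := hc.2
    have hsplit : (A c).card + (univ.filter fun j => ¬ c j = y j).card = N := by
      simpa using card_filter_add_card_filter_not (s := (univ : Finset (Fin N)))
        (p := fun j => c j = y j)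
    have : hammingDist c y = (univ.filter fun j => ¬ c j = y j).card := rfl
    rw [this] at hdist
    simp only [Fintype.card_fin] at hdist
    have : ((A c).card : ℝ) = N - ((univ.filter fun j => ¬ c j = y j).card : ℝ) := by
      have := congrArg (Nat.cast (R := ℝ)) hsplit
      push_cast at this
      linarith
    rw [this]
    nlinarith [hdist]
  have h2 : ∀ c ∈ s, ∀ c' ∈ s, c ≠ c' → ((A c ∩ A c').card : ℝ) ≤ 2/3 * ε * N := by
    intro c hc c' hc' hne
    rw [hs, Set.Finite.mem_toFinset] at hc hc'
    refine le_trans ?_ (hpair c hc.1 c' hc'.1 hne)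
    have : A c ∩ A c' ⊆ univ.filter fun j => c j = c' j := by
      intro j hj
      simp only [hA, mem_inter, mem_filter] at hj ⊢
      exact ⟨mem_univ _, hj.1.2.trans hj.2.2.symm⟩
    exact_mod_cast Finset.card_le_card this
  set a : Fin N → ℕ := fun j => (s.filter fun c => c j = y j).card with ha
  have keyA : ∑ j, a j = ∑ c ∈ s, (A c).card := by
    simp only [ha, hA, Finset.card_filter]
    rw [Finset.sum_comm]
  have keyB : ∑ j, (a j) * (a j) = ∑ c ∈ s, ∑ c' ∈ s, (A c ∩ A c').card := by
    have expand : ∀ j, a j * a j = ∑ c ∈ s, ∑ c' ∈ s, if c j = y j ∧ c' j = y j then 1 else 0 := by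
      intro j
      rw [ha]
      simp only [Finset.card_filter]
      rw [Finset.sum_mul_sum]
      apply Finset.sum_congr rfl; intro c _
      apply Finset.sum_congr rfl; intro c' _
      by_cases h1 : c j = y j <;> by_cases h2 : c' j = y j <;> simp [h1, h2]
    have expand2 : ∀ c c', (A c ∩ A c').card = ∑ j, if c j = y j ∧ c' j = y j then 1 else 0 := by
      intro c c'
      rw [hA, ← Finset.filter_and, Finset.card_filter]
    simp only [expand, expand2]
    rw [Finset.sum_comm]
    apply Finset.sum_congr rfl; intro c _
    rw [Finset.sum_comm]
  have hRA : (L : ℝ) * (Real.sqrt ε * N) ≤ ∑ j, (a j : ℝ) := by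
    have : ∑ j, (a j : ℝ) = ∑ c ∈ s, ((A c).card : ℝ) := by exact_mod_cast congrArg (Nat.cast (R := ℝ)) keyA
    rw [this]
    calc (L:ℝ) * (Real.sqrt ε * N) = ∑ _c ∈ s, Real.sqrt ε * N := by rw [Finset.sum_const]; push_cast; ring
      _ ≤ ∑ c ∈ s, ((A c).card : ℝ) := Finset.sum_le_sum h1
  have hRB : ∑ j, (a j : ℝ)^2 ≤ L * N + L * L * (2/3 * ε * N) := by
    have cast1 : ∑ j, (a j : ℝ)^2 = ∑ c ∈ s, ∑ c' ∈ s, ((A c ∩ A c').card : ℝ) := by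
      have := congrArg (Nat.cast (R := ℝ)) keyB
      push_cast at this
      simpa [sq] using this
    rw [cast1]
    have inner : ∀ c ∈ s, ∑ c' ∈ s, ((A c ∩ A c').card : ℝ) ≤ N + L * (2/3 * ε * N) := by
      intro c hc
      rw [← Finset.sum_erase_add s _ hc]
      have t1 : ∑ c' ∈ s.erase c, ((A c ∩ A c').card : ℝ) ≤ (L : ℝ) * (2/3 * ε * N) := by
        calc ∑ c' ∈ s.erase c, ((A c ∩ A c').card : ℝ) ≤ ∑ c' ∈ s.erase c, (2/3 * ε * N) := by
              apply Finset.sum_le_sum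
              intro c' hc'
              exact h2 c hc c' (Finset.mem_of_mem_erase hc') (Ne.symm (Finset.ne_of_mem_erase hc'))
          _ = (s.erase c).card * (2/3 * ε * N) := by rw [Finset.sum_const]; ring
          _ ≤ (L : ℝ) * (2/3 * ε * N) := by
              have : ((s.erase c).card : ℝ) ≤ L := by
                exact_mod_cast Finset.card_le_card (Finset.erase_subset _ _)
              have hx : (0:ℝ) ≤ 2/3 * ε * N := by positivity
              exact mul_le_mul_of_nonneg_right this hx
      have t2 : ((A c ∩ A c).card : ℝ) ≤ N := by
        have : (A c ∩ A c).card ≤ N :=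
          le_trans (Finset.card_le_card (Finset.inter_subset_left))
            (le_trans (Finset.card_filter_le _ _) (by simp))
        exact_mod_cast this
      linarith
    calc ∑ c ∈ s, ∑ c' ∈ s, ((A c ∩ A c').card : ℝ) ≤ ∑ c ∈ s, ((N : ℝ) + L * (2/3 * ε * N)) :=
          Finset.sum_le_sum inner
      _ = L * ((N : ℝ) + L * (2/3 * ε * N)) := by rw [Finset.sum_const]; ring
      _ = L * N + L * L * (2/3 * ε * N) := by ring
  have hCS : (∑ j, (a j : ℝ))^2 ≤ N * ∑ j, (a j : ℝ)^2 := by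
    simpa using sq_sum_le_card_mul_sum_sq (s := (univ : Finset (Fin N))) (f := fun j => (a j : ℝ))
  rw [hcard]
  have hNR : (0:ℝ) < N := by exact_mod_cast hN
  have hLnn : (0:ℝ) ≤ L := Nat.cast_nonneg _
  have hsq : Real.sqrt ε ^ 2 = ε := Real.sq_sqrt hε.le
  have hsum_nn : (0:ℝ) ≤ ∑ j, (a j : ℝ) := Finset.sum_nonneg fun j _ => Nat.cast_nonneg _
  have hLsq : ((L:ℝ) * (Real.sqrt ε * N))^2 ≤ (∑ j, (a j : ℝ))^2 := by
    apply pow_le_pow_left₀ _ hRA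
    positivity
  have hmain : (L:ℝ)^2 * ε * N^2 ≤ (L:ℝ) * N^2 + L^2 * (2/3 * ε * N^2) := by
    have e1 : ((L:ℝ) * (Real.sqrt ε * N))^2 = (L:ℝ)^2 * ε * N^2 := by
      rw [mul_pow, mul_pow, hsq]; ring
    nlinarith [hLsq, hCS, hRB, hNR]
  rw [le_div_iff₀ hε]
  have hN2 : (0:ℝ) < (N:ℝ)^2 := by positivity
  have h3 : ((L:ℝ)^2*ε) * (N:ℝ)^2 ≤ (3*(L:ℝ)) * (N:ℝ)^2 := by nlinarith [hmain]
  have h4 : (L:ℝ)^2*ε ≤ 3*L := le_of_mul_le_mul_right h3 hN2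
  rcases eq_or_lt_of_le hLnn with hL0 | hL0
  · rw [← hL0]; norm_num
  · exact le_of_mul_le_mul_left (by nlinarith [h4]) hL0

lemma exists_good_T (Fq : Type) [Field Fq] [Fintype Fq] [DecidableEq Fq] (n d N t : ℕ)
    (htN : t ≤ N)
    (hlt : Fintype.card Fq ^ Module.finrank Fq (MvPolynomial.restrictTotalDegree (Fin n) Fq d)
        * (N.choose t * d ^ t) < Fintype.card Fq ^ t) :
    ∃ T : Fin N → (Fin n → Fq), ∀ p : MvPolynomial (Fin n) Fq,
      p.totalDegree ≤ d → p ≠ 0 → (univ.filter fun j => eval (T j) p = 0).card < t := by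
  classical
  set q := Fintype.card Fq with hq
  have hq0 : 0 < q := Fintype.card_pos
  set P := MvPolynomial.restrictTotalDegree (Fin n) Fq d with hP
  haveI : Finite P := Module.finite_of_finite Fq
  haveI : Fintype P := Fintype.ofFinite _
  set k := Module.finrank Fq P with hk
  have hcardP : Fintype.card P = q ^ k := Module.card_eq_pow_finrank
  set badp : P → Finset (Fin N → (Fin n → Fq)) := fun p =>
    univ.filter fun T => (p : MvPolynomial (Fin n) Fq) ≠ 0 ∧
      t ≤ (univ.filter fun j => eval (T j) (p : MvPolynomial (Fin n) Fq) = 0).card with hbadp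
  set bad : Finset (Fin N → (Fin n → Fq)) := univ.filter fun T => ∃ p : P,
      (p : MvPolynomial (Fin n) Fq) ≠ 0 ∧
      t ≤ (univ.filter fun j => eval (T j) (p : MvPolynomial (Fin n) Fq) = 0).card with hbad
  have hcardfun : Fintype.card (Fin n → Fq) = q ^ n := by simp [hq]
  have hper : ∀ p : P, (badp p).card * q ^ t ≤ N.choose t * d ^ t * (q ^ n) ^ N := by
    intro p
    rcases eq_or_ne (p : MvPolynomial (Fin n) Fq) 0 with h0 | h0
    · have he : badp p = ∅ := by
        rw [hbadp]; ext T; simp [h0]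
      rw [he]; simp
    · set Zp := (univ.filter fun x : Fin n → Fq => eval x (p : MvPolynomial (Fin n) Fq) = 0)
        with hZp
      have hSZ : Zp.card * q ≤ d * q ^ n := by
        have h1 := schwartz_zippel n (p : MvPolynomial (Fin n) Fq) h0
        rw [Fintype.card_subtype] at h1
        refine le_trans h1 (Nat.mul_le_mul_right _ ?_)
        exact (MvPolynomial.mem_restrictTotalDegree _ _ _).mp p.2
      have hsub : badp p ⊆ (powersetCard t (univ : Finset (Fin N))).biUnion fun S =>
          Fintype.piFinset fun j => if j ∈ S then Zp else univ := by
        intro T hT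
        rw [hbadp, Finset.mem_filter] at hT
        obtain ⟨S, hSsub, hScard⟩ := Finset.exists_subset_card_eq hT.2.2
        rw [Finset.mem_biUnion]
        refine ⟨S, ?_, ?_⟩
        · rw [Finset.mem_powersetCard]
          exact ⟨Finset.subset_univ _, hScard⟩
        · rw [Fintype.mem_piFinset]
          intro j
          split_ifs with hj
          · have := hSsub hj
            simp only [Finset.mem_filter] at this
            rw [hZp, Finset.mem_filter]
            exact ⟨Finset.mem_univ _, this.2⟩
          · exact Finset.mem_univ _
      have hcardpi : ∀ S ∈ powersetCard t (univ : Finset (Fin N)),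
          (Fintype.piFinset fun j => if j ∈ S then Zp else univ).card
            = Zp.card ^ t * (q ^ n) ^ (N - t) := by
        intro S hS
        rw [Finset.mem_powersetCard] at hS
        rw [Fintype.card_piFinset]
        have : ∀ j : Fin N, (if j ∈ S then Zp else univ).card
            = if j ∈ S then Zp.card else q ^ n := by
          intro j; split_ifs <;> simp [hcardfun]
        rw [Finset.prod_congr rfl fun j _ => this j]
        rw [Finset.prod_ite, Finset.prod_const, Finset.prod_const]
        have e1 : (univ.filter fun j : Fin N => j ∈ S) = S := by
          ext j; simp
        have e2 : (univ.filter fun j : Fin N => ¬ j ∈ S) = Sᶜ := by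
          ext j; simp
        rw [e1, e2, hS.2, Finset.card_compl, hS.2, Fintype.card_fin]
      have hb1 : (badp p).card ≤ N.choose t * (Zp.card ^ t * (q ^ n) ^ (N - t)) := by
        calc (badp p).card ≤ ((powersetCard t (univ : Finset (Fin N))).biUnion fun S =>
              Fintype.piFinset fun j => if j ∈ S then Zp else univ).card :=
            Finset.card_le_card hsub
          _ ≤ ∑ S ∈ powersetCard t (univ : Finset (Fin N)),
              (Fintype.piFinset fun j => if j ∈ S then Zp else univ).card :=
            Finset.card_biUnion_le
          _ = ∑ _S ∈ powersetCard t (univ : Finset (Fin N)), Zp.card ^ t * (q ^ n) ^ (N - t) :=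
            Finset.sum_congr rfl hcardpi
          _ = N.choose t * (Zp.card ^ t * (q ^ n) ^ (N - t)) := by
            rw [Finset.sum_const, smul_eq_mul, Finset.card_powersetCard, Finset.card_univ,
              Fintype.card_fin]
      calc (badp p).card * q ^ t
          ≤ N.choose t * (Zp.card ^ t * (q ^ n) ^ (N - t)) * q ^ t :=
            Nat.mul_le_mul_right _ hb1
        _ = N.choose t * ((Zp.card * q) ^ t * (q ^ n) ^ (N - t)) := by
            rw [mul_pow]; ring
        _ ≤ N.choose t * ((d * q ^ n) ^ t * (q ^ n) ^ (N - t)) := by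
            apply Nat.mul_le_mul_left
            apply Nat.mul_le_mul_right
            exact Nat.pow_le_pow_left hSZ t
        _ = N.choose t * d ^ t * ((q ^ n) ^ t * (q ^ n) ^ (N - t)) := by
            rw [mul_pow]; ring
        _ = N.choose t * d ^ t * (q ^ n) ^ N := by
            rw [← pow_add]
            congr 2
            omega
  have htotal : bad.card * q ^ t ≤ q ^ k * (N.choose t * d ^ t) * (q ^ n) ^ N := by
    have hsub : bad ⊆ (univ : Finset P).biUnion badp := by
      intro T hT
      rw [hbad, Finset.mem_filter] at hT
      obtain ⟨p, hp1, hp2⟩ := hT.2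
      rw [Finset.mem_biUnion]
      exact ⟨p, Finset.mem_univ _, by rw [hbadp, Finset.mem_filter]; exact ⟨Finset.mem_univ _, hp1, hp2⟩⟩
    calc bad.card * q ^ t ≤ ((univ : Finset P).biUnion badp).card * q ^ t :=
          Nat.mul_le_mul_right _ (Finset.card_le_card hsub)
      _ ≤ (∑ p : P, (badp p).card) * q ^ t :=
          Nat.mul_le_mul_right _ Finset.card_biUnion_le
      _ = ∑ p : P, (badp p).card * q ^ t := by rw [Finset.sum_mul]
      _ ≤ ∑ _p : P, N.choose t * d ^ t * (q ^ n) ^ N := Finset.sum_le_sum fun p _ => hper p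
      _ = q ^ k * (N.choose t * d ^ t) * (q ^ n) ^ N := by
          rw [Finset.sum_const, smul_eq_mul, Finset.card_univ, hcardP]; ring
  have hbadlt : bad.card < (q ^ n) ^ N := by
    have h2 : bad.card * q ^ t < (q ^ n) ^ N * q ^ t := by
      calc bad.card * q ^ t ≤ q ^ k * (N.choose t * d ^ t) * (q ^ n) ^ N := htotal
        _ < q ^ t * (q ^ n) ^ N := by
            have hpow : 0 < (q ^ n) ^ N := Nat.pow_pos (Nat.pow_pos hq0)
            exact (Nat.mul_lt_mul_right hpow).mpr hlt
        _ = (q ^ n) ^ N * q ^ t := mul_comm _ _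
    exact lt_of_mul_lt_mul_right h2 (Nat.zero_le _)
  by_contra hcon
  push_neg at hcon
  have : bad = univ := by
    rw [Finset.eq_univ_iff_forall]
    intro T
    obtain ⟨p, hpd, hp0, hpt⟩ := hcon T
    rw [hbad, Finset.mem_filter]
    refine ⟨Finset.mem_univ _, ⟨⟨p, (MvPolynomial.mem_restrictTotalDegree _ _ _).mpr hpd⟩, hp0, hpt⟩⟩
  rw [this, Finset.card_univ] at hbadlt
  have : Fintype.card (Fin N → Fin n → Fq) = (q ^ n) ^ N := by
    simp [hcardfun]
  omega

end Aux

set_option maxHeartbeats 2000000 in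
theorem stmt_14 : ∃ C : ℝ, 0 < C ∧ ∃ c : ℕ → ℝ, (∀ d : ℕ, 0 < d → 0 < c d) ∧
    ∀ (ε : ℝ), 0 < ε → ε < 1 →
      ∀ (r q n d : ℕ), IsPrimePow r → q = r ^ 2 → 0 < n → 0 < d →
        (d : ℝ) ≤ ε * (Real.sqrt q - 1) / 2 - 1 →
        ∀ (Fq : Type) [Field Fq] [Fintype Fq] [DecidableEq Fq], Fintype.card Fq = q →
          ∃ (N : ℕ) (_ : 0 < N) (T1 : Fin N → Fin n → Fq),
            Module.finrank Fq (puncturedRM Fq n d T1) = (n + d).choose n ∧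
            (∀ w ∈ puncturedRM Fq n d T1, w ≠ 0 → (1 - ε) * N ≤ hammingNorm w) ∧
            c d * ε / (d.factorial : ℝ) ≤ ((n + d).choose n : ℝ) / N ∧
            ListDecodable (puncturedRM Fq n d T1 : Set (Fin N → Fq))
              (1 - Real.sqrt ε) (C / ε) := by
  refine ⟨3, by norm_num, fun _ => 1/48, fun d _ => by norm_num, ?_⟩
  intro ε hε hε1 r q n d hrpp hqr hn hd hdeg Fq _ _ _ hcard
  classical
  open Finset MvPolynomial in
  -- ## Parameters
  set k := (n + d).choose n with hk
  have hk0 : 0 < k := Nat.choose_pos (by omega)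
  have hk0R : (0:ℝ) < k := by exact_mod_cast hk0
  set m := ⌈1/ε⌉₊ with hm
  have hm0 : 0 < m := Nat.ceil_pos.mpr (by positivity)
  have hm0R : (0:ℝ) < m := by exact_mod_cast hm0
  set t := 16 * k with htdef
  set N := 24 * k * m with hNdef
  have hN0 : 0 < N := by
    rw [hNdef]; positivity
  have hNR : (0:ℝ) < N := by exact_mod_cast hN0
  have htN : t ≤ N := by
    rw [htdef, hNdef]
    calc 16 * k ≤ 24 * k * 1 := by omega
      _ ≤ 24 * k * m := Nat.mul_le_mul_left _ hm0
  have ht0 : 0 < t := by rw [htdef]; omega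
  -- ## Field size facts
  have hr2 : 2 ≤ r := hrpp.two_le
  have hq0 : 0 < q := by rw [hqr]; positivity
  have hqR : (q:ℝ) = (r:ℝ)^2 := by rw [hqr]; push_cast; ring
  have hsqrtq : Real.sqrt q = r := by
    rw [hqR]; exact Real.sqrt_sq (by positivity)
  rw [hsqrtq] at hdeg
  have hd1R : (1:ℝ) ≤ d := by exact_mod_cast hd
  have h4 : (4:ℝ) ≤ ε * ((r:ℝ) - 1) := by linarith
  have hr1 : (0:ℝ) < (r:ℝ) - 1 := by
    by_contra hcon
    push_neg at hcon
    have : ε * ((r:ℝ) - 1) ≤ 0 := mul_nonpos_of_nonneg_of_nonpos hε.le hcon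
    linarith
  have hr5 : (5:ℝ) ≤ r := by nlinarith [h4, mul_nonneg (by linarith : (0:ℝ) ≤ 1 - ε) hr1.le]
  have hmR : (m:ℝ) ≤ 1/ε + 1 := (Nat.ceil_lt_add_one (by positivity)).le
  have hεm : 1 ≤ ε * m := by
    have h1 : 1/ε ≤ (m:ℝ) := Nat.le_ceil _
    calc (1:ℝ) = ε * (1/ε) := by field_simp
      _ ≤ ε * m := by apply mul_le_mul_of_nonneg_left h1 hε.le
  have hεm2 : ε * m ≤ 2 := by
    have h1 : ε * (m:ℝ) ≤ ε * (1/ε + 1) := mul_le_mul_of_nonneg_left hmR hε.le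
    have h2 : ε * (1/ε + 1) = 1 + ε := by field_simp
    linarith
  have hmd : (m:ℝ) * d ≤ (r:ℝ) - 3 := by
    have hdpos : (0:ℝ) ≤ ε*((r:ℝ)-1)/2 - 1 := by linarith
    have h1 : (m:ℝ) * d ≤ (1/ε + 1) * (ε*((r:ℝ)-1)/2 - 1) := by
      apply mul_le_mul hmR hdeg (by positivity) (by positivity)
    have h2 : (1/ε) * ε = 1 := by field_simp
    have h3 : (1:ℝ) ≤ 1/ε := by rw [le_div_iff₀ hε]; linarith
    nlinarith [h1, h2, h3, hr1, hε, hε1]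
  -- ## The counting inequality
  have hfr : Module.finrank Fq (MvPolynomial.restrictTotalDegree (Fin n) Fq d) = k :=
    finrank_restrictTotalDegree' Fq n d
  have hltR : (q:ℝ)^k * ((N.choose t : ℝ) * (d:ℝ)^t) < (q:ℝ)^t := by
    have hchoose : (N.choose t : ℝ) ≤ (4.5*m)^t := by
      have h := choose_le_real N t ht0
      have heq : 3*(N:ℝ)/(t:ℝ) = 4.5*m := by
        rw [hNdef, htdef]
        push_cast
        field_simp
        ring
      rwa [heq] at h
    set a : ℝ := (r:ℝ) - 3 with haR
    have ha2 : (2:ℝ) ≤ a := by rw [haR]; linarith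
    have key16 : (q:ℝ) * (4.5*a)^16 < (q:ℝ)^16 := by
      have h1 : a * ((r:ℝ)+3) ≤ (r:ℝ)^2 := by rw [haR]; nlinarith
      have hA : a^16 * ((r:ℝ)+3)^16 ≤ (r:ℝ)^32 := by
        calc a^16 * ((r:ℝ)+3)^16 = (a*((r:ℝ)+3))^16 := by rw [mul_pow]
          _ ≤ ((r:ℝ)^2)^16 := pow_le_pow_left₀ (by nlinarith) h1 16
          _ = (r:ℝ)^32 := by ring
      have hB : (8:ℝ)^14 * (r:ℝ)^2 ≤ ((r:ℝ)+3)^16 := by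
        have h8 : (8:ℝ) ≤ (r:ℝ)+3 := by linarith
        have h14 : (8:ℝ)^14 ≤ ((r:ℝ)+3)^14 := pow_le_pow_left₀ (by norm_num) h8 14
        have h2 : (r:ℝ)^2 ≤ ((r:ℝ)+3)^2 := pow_le_pow_left₀ (by linarith) (by linarith) 2
        calc (8:ℝ)^14 * (r:ℝ)^2 ≤ ((r:ℝ)+3)^14 * ((r:ℝ)+3)^2 :=
              mul_le_mul h14 h2 (by positivity) (by positivity)
          _ = ((r:ℝ)+3)^16 := by ring
      have hC : a^16 * ((8:ℝ)^14 * (r:ℝ)^2) ≤ (r:ℝ)^32 := by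
        calc a^16 * ((8:ℝ)^14 * (r:ℝ)^2) ≤ a^16 * ((r:ℝ)+3)^16 :=
              mul_le_mul_of_nonneg_left hB (by positivity)
          _ ≤ (r:ℝ)^32 := hA
      have hD : (8:ℝ)^14 * ((q:ℝ) * (4.5*a)^16) ≤ (4.5:ℝ)^16 * (r:ℝ)^32 := by
        have e1 : (8:ℝ)^14 * ((q:ℝ) * (4.5*a)^16) = (4.5:ℝ)^16 * (a^16 * ((8:ℝ)^14 * (r:ℝ)^2)) := by
          rw [hqR, mul_pow]; ring
        rw [e1]
        apply mul_le_mul_of_nonneg_left hC (by positivity)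
      have hE : (4.5:ℝ)^16 * (r:ℝ)^32 < (8:ℝ)^14 * (r:ℝ)^32 := by
        have : (4.5:ℝ)^16 < (8:ℝ)^14 := by norm_num
        have hr32 : (0:ℝ) < (r:ℝ)^32 := by positivity
        exact mul_lt_mul_of_pos_right this hr32
      have hF : (8:ℝ)^14 * ((q:ℝ) * (4.5*a)^16) < (8:ℝ)^14 * (q:ℝ)^16 := by
        calc (8:ℝ)^14 * ((q:ℝ) * (4.5*a)^16) ≤ (4.5:ℝ)^16 * (r:ℝ)^32 := hD
          _ < (8:ℝ)^14 * (r:ℝ)^32 := hE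
          _ = (8:ℝ)^14 * (q:ℝ)^16 := by rw [hqR]; ring
      exact lt_of_mul_lt_mul_left hF (by positivity)
    have hmd45 : (4.5:ℝ)*((m:ℝ)*(d:ℝ)) ≤ 4.5*a := by rw [haR]; linarith [hmd]
    clear_value a
    calc (q:ℝ)^k * ((N.choose t : ℝ) * (d:ℝ)^t)
        ≤ (q:ℝ)^k * ((4.5*(m:ℝ))^t * (d:ℝ)^t) := by
          apply mul_le_mul_of_nonneg_left
            (mul_le_mul_of_nonneg_right hchoose (by positivity)) (by positivity)
      _ = (q:ℝ)^k * (4.5*((m:ℝ)*(d:ℝ)))^t := by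
          rw [← mul_pow]; ring_nf
      _ ≤ (q:ℝ)^k * (4.5*a)^t := by
          apply mul_le_mul_of_nonneg_left
            (pow_le_pow_left₀ (by positivity) hmd45 t) (by positivity)
      _ = ((q:ℝ) * (4.5*a)^16)^k := by
          rw [htdef]
          conv_rhs => rw [mul_pow, ← pow_mul]
      _ < ((q:ℝ)^16)^k := by
          apply pow_lt_pow_left₀ key16 (by positivity)
          omega
      _ = (q:ℝ)^t := by rw [htdef, ← pow_mul]
  have hlt : Fintype.card Fq ^ Module.finrank Fq (MvPolynomial.restrictTotalDegree (Fin n) Fq d)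
      * (N.choose t * d ^ t) < Fintype.card Fq ^ t := by
    rw [hfr, hcard]
    exact_mod_cast hltR
  obtain ⟨T, hT⟩ := exists_good_T Fq n d N t htN hlt
  -- ## The evaluation map
  set f : MvPolynomial (Fin n) Fq →ₗ[Fq] (Fin N → Fq) :=
    LinearMap.pi fun j => (MvPolynomial.aeval (T j)).toLinearMap with hf
  have hfapp : ∀ (p : MvPolynomial (Fin n) Fq) (j : Fin N),
      f p j = MvPolynomial.eval (T j) p := by
    intro p j
    show MvPolynomial.aeval (T j) p = _
    rw [MvPolynomial.aeval_def, MvPolynomial.eval]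
    rfl
  have hcode : puncturedRM Fq n d T
      = Submodule.map f (MvPolynomial.restrictTotalDegree (Fin n) Fq d) := rfl
  -- every nonzero codeword has few zero coordinates
  have hzeros : ∀ w ∈ puncturedRM Fq n d T, w ≠ 0 →
      ((Finset.univ.filter fun j => w j = 0).card : ℝ) ≤ 2/3 * ε * N := by
    intro w hw hw0
    rw [hcode, Submodule.mem_map] at hw
    obtain ⟨p, hp, rfl⟩ := hw
    have hp0 : p ≠ 0 := by
      rintro rfl
      simp at hw0
    have hdeg' : p.totalDegree ≤ d := (MvPolynomial.mem_restrictTotalDegree _ _ _).mp hp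
    have hcount := hT p hdeg' hp0
    have heq : (Finset.univ.filter fun j => f p j = 0)
        = (Finset.univ.filter fun j => MvPolynomial.eval (T j) p = 0) := by
      apply Finset.filter_congr
      intro j _
      rw [hfapp]
    have hcard_le : ((Finset.univ.filter fun j => f p j = 0).card : ℝ) ≤ t := by
      rw [heq]
      exact_mod_cast hcount.le
    have h23 : (t:ℝ) ≤ 2/3 * ε * N := by
      rw [htdef, hNdef]
      push_cast
      nlinarith [mul_nonneg hk0R.le (sub_nonneg.mpr hεm)]
    linarith
  refine ⟨N, hN0, T, ?_, ?_, ?_, ?_⟩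
  · -- dimension
    have hker : LinearMap.ker (f.domRestrict (MvPolynomial.restrictTotalDegree (Fin n) Fq d)) = ⊥ := by
      rw [LinearMap.ker_eq_bot']
      intro p hp0
      by_contra hne
      have hp' : (p : MvPolynomial (Fin n) Fq) ≠ 0 := by
        intro h
        exact hne (Subtype.ext h)
      have hdeg' : (p : MvPolynomial (Fin n) Fq).totalDegree ≤ d :=
        (MvPolynomial.mem_restrictTotalDegree _ _ _).mp p.2
      have hcount := hT p hdeg' hp'
      have hall : (Finset.univ.filter fun j =>
          MvPolynomial.eval (T j) (p : MvPolynomial (Fin n) Fq) = 0) = Finset.univ := by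
        rw [Finset.eq_univ_iff_forall]
        intro j
        rw [Finset.mem_filter]
        refine ⟨Finset.mem_univ _, ?_⟩
        have := congrFun (congrArg (fun g : Fin N → Fq => g) hp0) j
        have h2 : f (p : MvPolynomial (Fin n) Fq) j = 0 := by
          rw [LinearMap.domRestrict_apply] at hp0
          rw [hp0]
          rfl
        rw [hfapp] at h2
        exact h2
      rw [hall, Finset.card_univ, Fintype.card_fin] at hcount
      omega
    have hinj := LinearMap.ker_eq_bot.mp hker
    rw [hcode, ← LinearMap.range_domRestrict]
    rw [LinearMap.finrank_range_of_inj hinj, hfr]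
  · -- distance
    intro w hw hw0
    have h := hzeros w hw hw0
    have hsplit : (Finset.univ.filter fun j => w j = 0).card + hammingNorm w = N := by
      have : hammingNorm w = (Finset.univ.filter fun j => ¬ w j = 0).card := rfl
      rw [this]
      simpa using Finset.card_filter_add_card_filter_not
        (s := (Finset.univ : Finset (Fin N))) (p := fun j => w j = 0)
    have hnorm : (hammingNorm w : ℝ) = N - (Finset.univ.filter fun j => w j = 0).card := by
      have := congrArg (Nat.cast (R := ℝ)) hsplit
      push_cast at this
      linarith
    rw [hnorm]
    nlinarith [h, mul_nonneg hε.le hNR.le]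
  · -- rate
    show (1:ℝ)/48 * ε / (d.factorial : ℝ) ≤ ((n + d).choose n : ℝ) / N
    have hfact : (1:ℝ) ≤ d.factorial := by exact_mod_cast d.factorial_pos
    have step1 : (1:ℝ)/48 * ε / (d.factorial : ℝ) ≤ 1/48 * ε :=
      div_le_self (by positivity) hfact
    have step2 : (1:ℝ)/48 * ε ≤ (k : ℝ) / N := by
      rw [le_div_iff₀ hNR]
      have hNcast : (N:ℝ) = 24 * k * m := by rw [hNdef]; push_cast; ring
      rw [hNcast]
      nlinarith [mul_le_mul_of_nonneg_left hεm2 hk0R.le]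
    calc (1:ℝ)/48 * ε / (d.factorial : ℝ) ≤ 1/48 * ε := step1
      _ ≤ (k : ℝ) / N := step2
  · -- list decodability
    apply johnson _ ε hε hN0
    intro c hc c' hc' hne
    have hcm : c ∈ puncturedRM Fq n d T := hc
    have hcm' : c' ∈ puncturedRM Fq n d T := hc'
    have hsub : c - c' ∈ puncturedRM Fq n d T := Submodule.sub_mem _ hcm hcm'
    have hne0 : c - c' ≠ 0 := sub_ne_zero.mpr hne
    have h := hzeros _ hsub hne0
    have heq : (Finset.univ.filter fun j => c j = c' j)
        = (Finset.univ.filter fun j => (c - c') j = 0) := by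
      apply Finset.filter_congr
      intro j _
      simp [sub_eq_zero]
    rw [heq]
    exact h
end
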